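/- arXiv:2603.07873 — 4 statements merged into one kernel-verified Lean document; each statement's English description precedes it below -/
import Mathlib

section
/- Let f ∈ ℚ(q)[t] be a quantum integer-valued polynomial of t-degree d. Then there exists N(t,q) ∈ ℤ[t,q,q^{−1}] (a polynomial in t with Laurent-polynomial coefficients) of t-degree at most d such that, as formal power series in t with coefficients in ℚ(q), (∏_{i=0}^{d}(1 − t q^i)) · Σ_{n≥0} f([n]_q) t^n = N(t,q). If moreover f([n]_q) ∈ ℤ[q] for all integers n ≥ 0, then N(t,q) ∈ ℤ[t,q]. -/
set_option maxRecDepth 16000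


noncomputable section

/-- The field `ℚ(q)` of rational functions. -/
abbrev Fq : Type := RatFunc ℚ

/-- The variable `q ∈ ℚ(q)`. -/
def qq : Fq := RatFunc.X

/-- The `q`-integer `[k]_q = (1 - q^k)/(1 - q) ∈ ℚ(q)`, for `k ∈ ℤ`. -/
def qint (k : ℤ) : Fq := (1 - qq ^ k) / (1 - qq)

/-- The canonical inclusion `ℤ[q] → ℚ(q)`. -/
def toRat : Polynomial ℤ →+* Fq :=
  (algebraMap (Polynomial ℚ) Fq).comp (Polynomial.mapRingHom (Int.castRingHom ℚ))

/-- `r ∈ ℚ(q)` lies in the subring `ℤ[q,q^{−1}]` of Laurent polynomials. -/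
def IsIntLaurent (r : Fq) : Prop :=
  ∃ (p : Polynomial ℤ) (k : ℕ), r = qq ^ (-(k : ℤ)) * toRat p

/-- The denominator `∏_{i=0}^{d} (1 − t q^i)` as a formal power series in `t` over `ℚ(q)`. -/
def psDen (d : ℕ) : PowerSeries Fq :=
  ∏ i ∈ Finset.range (d + 1), (1 - PowerSeries.C (R := Fq) (qq ^ i) * PowerSeries.X)

/-- A polynomial `N(t,q) ∈ ℤ[t,q]` (a polynomial in `t` with coefficients in `ℤ[q]`)
viewed as a formal power series in `t` over `ℚ(q)`. -/
def psOfN (N : Polynomial (Polynomial ℤ)) : PowerSeries Fq :=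
  N.eval₂ ((PowerSeries.C (R := Fq)).comp toRat) PowerSeries.X


open Polynomial PowerSeries Finset

lemma qq_ne_zero : qq ≠ 0 := RatFunc.X_ne_zero

lemma one_sub_qq_ne_zero : (1 : Fq) - qq ≠ 0 := by
  intro h
  have h2 : (algebraMap (Polynomial ℚ) (RatFunc ℚ)) Polynomial.X
      = algebraMap (Polynomial ℚ) (RatFunc ℚ) 1 := by
    simpa [RatFunc.algebraMap_X, qq] using (sub_eq_zero.mp h).symm
  have h3 := RatFunc.algebraMap_injective ℚ h2
  simpa [Polynomial.coeff_one] using congrArg (fun p => Polynomial.coeff p 1) h3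

/-- The map `ℤ[q][t] → ℚ(q)[t]`. -/
def ψ : Polynomial (Polynomial ℤ) →+* Polynomial Fq := Polynomial.mapRingHom toRat

lemma toRat_X : toRat Polynomial.X = qq := by
  simp [toRat, qq]

lemma toRat_X_pow (a : ℕ) : toRat (Polynomial.X ^ a) = qq ^ a := by
  rw [map_pow, toRat_X]

lemma geom (r : Fq) :
    (1 - PowerSeries.C (R := Fq) r * PowerSeries.X) * PowerSeries.mk (fun n => r ^ n) = 1 := by
  ext n
  cases n with
  | zero => simp
  | succ n =>
    rw [sub_mul, one_mul, map_sub, mul_assoc, PowerSeries.coeff_C_mul,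
      PowerSeries.coeff_succ_X_mul]
    simp [pow_succ, mul_comm]

/-- The denominator as a polynomial over `Fq`. -/
def Dpoly (d : ℕ) : Polynomial Fq :=
  ∏ i ∈ Finset.range (d + 1), (1 - Polynomial.C (qq ^ i) * Polynomial.X)

lemma coe_linfac (r : Fq) :
    ((1 - Polynomial.C r * Polynomial.X : Polynomial Fq) : PowerSeries Fq)
      = 1 - PowerSeries.C (R := Fq) r * PowerSeries.X := by
  push_cast [Polynomial.coe_sub, Polynomial.coe_one, Polynomial.coe_mul, Polynomial.coe_C,
    Polynomial.coe_X]
  ring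

lemma psDen_eq (d : ℕ) : psDen d = ((Dpoly d : Polynomial Fq) : PowerSeries Fq) := by
  rw [psDen, Dpoly, ← Polynomial.coeToPowerSeries.ringHom_apply, map_prod]
  refine Finset.prod_congr rfl fun i _ => ?_
  rw [Polynomial.coeToPowerSeries.ringHom_apply, coe_linfac]

lemma qint_nat (n : ℕ) : qint (n : ℤ) = (1 - qq ^ n) * (1 - qq)⁻¹ := by
  rw [qint, zpow_natCast, div_eq_mul_inv]

/-- partial fraction coefficients -/
def bcoef (d : ℕ) (f : Polynomial Fq) (i : ℕ) : Fq :=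
  ∑ e ∈ Finset.range (d + 1),
    f.coeff e * ((1 - qq)⁻¹) ^ e * (e.choose i : Fq) * (-1) ^ i

lemma eval_qint_eq (d : ℕ) (f : Polynomial Fq) (hdeg : f.natDegree = d) (n : ℕ) :
    f.eval (qint n) = ∑ i ∈ Finset.range (d + 1), bcoef d f i * (qq ^ i) ^ n := by
  have h2 : ∀ e, (1 - qq ^ n : Fq) ^ e
      = ∑ i ∈ Finset.range (e + 1), (-1) ^ i * (qq ^ i) ^ n * (e.choose i : Fq) := by
    intro e
    rw [sub_eq_add_neg, add_comm, add_pow]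
    refine Finset.sum_congr rfl fun i _ => ?_
    rw [neg_pow, one_pow, mul_one, ← pow_mul, ← pow_mul, Nat.mul_comm]
  calc f.eval (qint n) = ∑ e ∈ Finset.range (d + 1), f.coeff e * (qint n) ^ e := by
        rw [Polynomial.eval_eq_sum_range' (show f.natDegree < d + 1 by omega)]
    _ = ∑ e ∈ Finset.range (d + 1), ∑ i ∈ Finset.range (d + 1),
          f.coeff e * ((1 - qq)⁻¹) ^ e * ((-1) ^ i * (qq ^ i) ^ n * (e.choose i : Fq)) := by
        refine Finset.sum_congr rfl fun e he => ?_
        have hstep : f.coeff e * (qint n) ^ e = ∑ i ∈ Finset.range (e + 1),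
            f.coeff e * ((1 - qq)⁻¹) ^ e * ((-1) ^ i * (qq ^ i) ^ n * (e.choose i : Fq)) := by
          rw [qint_nat, mul_pow, h2 e, Finset.sum_mul, Finset.mul_sum]
          refine Finset.sum_congr rfl fun i _ => by ring
        rw [hstep]
        refine Finset.sum_subset (Finset.range_subset_range.mpr ?_) (fun i _ hi => ?_)
        · simpa using Nat.succ_le_succ (Nat.lt_succ_iff.mp (Finset.mem_range.mp he))
        · have hlt : e < i := by
            have := Finset.mem_range.not.mp hi
            omega
          simp [Nat.choose_eq_zero_of_lt hlt]
    _ = ∑ i ∈ Finset.range (d + 1), bcoef d f i * (qq ^ i) ^ n := by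
        rw [Finset.sum_comm]
        refine Finset.sum_congr rfl fun i _ => ?_
        rw [bcoef, Finset.sum_mul]
        refine Finset.sum_congr rfl fun e _ => by ring

lemma mk_eq (d : ℕ) (f : Polynomial Fq) (hdeg : f.natDegree = d) :
    PowerSeries.mk (fun n : ℕ => f.eval (qint n)) =
      ∑ i ∈ Finset.range (d + 1),
        PowerSeries.C (R := Fq) (bcoef d f i) * PowerSeries.mk (fun n => (qq ^ i) ^ n) := by
  ext n
  rw [PowerSeries.coeff_mk, eval_qint_eq d f hdeg n, map_sum]
  exact Finset.sum_congr rfl fun i _ => by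
    rw [PowerSeries.coeff_C_mul, PowerSeries.coeff_mk]

/-- The cofactor polynomials. -/
def Qpoly (d i : ℕ) : Polynomial Fq :=
  ∏ j ∈ (Finset.range (d + 1)).erase i, (1 - Polynomial.C (qq ^ j) * Polynomial.X)

lemma psDen_mul_geom (d i : ℕ) (hi : i ∈ Finset.range (d + 1)) :
    psDen d * PowerSeries.mk (fun n => (qq ^ i) ^ n) = ((Qpoly d i : Polynomial Fq) : PowerSeries Fq) := by
  have hQ : ((Qpoly d i : Polynomial Fq) : PowerSeries Fq)
      = ∏ j ∈ (Finset.range (d + 1)).erase i, (1 - PowerSeries.C (R := Fq) (qq ^ j) * PowerSeries.X) := by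
    rw [Qpoly, ← Polynomial.coeToPowerSeries.ringHom_apply, map_prod]
    exact Finset.prod_congr rfl fun j _ => by
      rw [Polynomial.coeToPowerSeries.ringHom_apply, coe_linfac]
  rw [psDen, ← Finset.mul_prod_erase _ _ hi, mul_comm (1 - PowerSeries.C (R := Fq) (qq ^ i) * PowerSeries.X),
    mul_assoc, geom, mul_one, hQ]

/-- The numerator polynomial. -/
def Ppoly (d : ℕ) (f : Polynomial Fq) : Polynomial Fq :=
  ∑ i ∈ Finset.range (d + 1), Polynomial.C (bcoef d f i) * Qpoly d i

lemma main_eq (d : ℕ) (f : Polynomial Fq) (hdeg : f.natDegree = d) :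
    psDen d * PowerSeries.mk (fun m : ℕ => f.eval (qint m)) =
      ((Ppoly d f : Polynomial Fq) : PowerSeries Fq) := by
  rw [mk_eq d f hdeg, Finset.mul_sum, Ppoly, ← Polynomial.coeToPowerSeries.ringHom_apply,
    map_sum]
  refine Finset.sum_congr rfl fun i hi => ?_
  rw [Polynomial.coeToPowerSeries.ringHom_apply, Polynomial.coe_mul, Polynomial.coe_C,
    ← psDen_mul_geom d i hi]
  ring

lemma Ppoly_natDegree (d : ℕ) (f : Polynomial Fq) : (Ppoly d f).natDegree ≤ d := by
  refine Polynomial.natDegree_sum_le_of_forall_le _ _ fun i hi => ?_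
  refine le_trans (Polynomial.natDegree_C_mul_le _ _) ?_
  refine le_trans (Polynomial.natDegree_prod_le _ _) ?_
  calc ∑ j ∈ (Finset.range (d + 1)).erase i, (1 - Polynomial.C (qq ^ j) * Polynomial.X).natDegree
      ≤ ∑ j ∈ (Finset.range (d + 1)).erase i, 1 := by
        refine Finset.sum_le_sum fun j _ => ?_
        refine le_trans (Polynomial.natDegree_sub_le _ _) (max_le (by simp) ?_)
        exact le_trans (Polynomial.natDegree_C_mul_le _ _) Polynomial.natDegree_X_le
    _ ≤ d := by
        rw [Finset.sum_const, smul_eq_mul, mul_one, Finset.card_erase_of_mem hi,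
          Finset.card_range]
        omega

/-- The denominator over `ℤ[q]`. -/
def Dz (d : ℕ) : Polynomial (Polynomial ℤ) :=
  ∏ i ∈ Finset.range (d + 1), (1 - Polynomial.C (Polynomial.X ^ i) * Polynomial.X)

lemma ψ_Dz (d : ℕ) : ψ (Dz d) = Dpoly d := by
  rw [Dz, Dpoly, map_prod]
  refine Finset.prod_congr rfl fun i _ => ?_
  rw [ψ, Polynomial.coe_mapRingHom, Polynomial.map_sub, Polynomial.map_one,
    Polynomial.map_mul, Polynomial.map_C, Polynomial.map_X, toRat_X_pow]

lemma coeff_Ppoly (d : ℕ) (f : Polynomial Fq) (hdeg : f.natDegree = d) (m : ℕ) :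
    (Ppoly d f).coeff m =
      ∑ jk ∈ Finset.HasAntidiagonal.antidiagonal m, toRat ((Dz d).coeff jk.1) * f.eval (qint jk.2) := by
  have h := congrArg (PowerSeries.coeff (R := Fq) m) (main_eq d f hdeg)
  rw [PowerSeries.coeff_mul, Polynomial.coeff_coe] at h
  rw [← h]
  refine Finset.sum_congr rfl fun jk _ => ?_
  rw [psDen_eq, Polynomial.coeff_coe, ← ψ_Dz, ψ, Polynomial.coe_mapRingHom,
    Polynomial.coeff_map, PowerSeries.coeff_mk]

lemma IIL_toRat (p : Polynomial ℤ) : IsIntLaurent (toRat p) :=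
  ⟨p, 0, by simp⟩

lemma IIL_zero : IsIntLaurent 0 := by simpa using IIL_toRat 0

lemma qq_zpow_neg_add (k k' : ℕ) :
    (qq : Fq) ^ (-((k + k' : ℕ) : ℤ)) = qq ^ (-(k : ℤ)) * qq ^ (-(k' : ℤ)) := by
  rw [← zpow_add₀ qq_ne_zero]
  push_cast
  ring_nf

lemma IIL_mul {r s : Fq} (hr : IsIntLaurent r) (hs : IsIntLaurent s) : IsIntLaurent (r * s) := by
  obtain ⟨p, k, rfl⟩ := hr
  obtain ⟨p', k', rfl⟩ := hs
  exact ⟨p * p', k + k', by rw [map_mul, qq_zpow_neg_add]; ring⟩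

lemma qq_pow_shift {k K : ℕ} (h : k ≤ K) :
    (qq : Fq) ^ (-(k : ℤ)) = qq ^ (-(K : ℤ)) * qq ^ (K - k) := by
  rw [← zpow_natCast qq ((K : ℕ) - k), ← zpow_add₀ qq_ne_zero]
  congr 1
  push_cast [Nat.cast_sub h]
  ring

lemma IIL_add {r s : Fq} (hr : IsIntLaurent r) (hs : IsIntLaurent s) : IsIntLaurent (r + s) := by
  obtain ⟨p, k, rfl⟩ := hr
  obtain ⟨p', k', rfl⟩ := hs
  refine ⟨Polynomial.X ^ (max k k' - k) * p + Polynomial.X ^ (max k k' - k') * p',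
    max k k', ?_⟩
  rw [map_add, map_mul, map_mul, toRat_X_pow, toRat_X_pow, mul_add,
    qq_pow_shift (le_max_left k k'), qq_pow_shift (le_max_right k k')]
  ring

lemma IIL_sum {α : Type} (s : Finset α) (g : α → Fq) (h : ∀ a ∈ s, IsIntLaurent (g a)) :
    IsIntLaurent (∑ a ∈ s, g a) := by
  classical
  induction s using Finset.induction_on with
  | empty => simpa using IIL_zero
  | @insert a s' hnot ih =>
    rw [Finset.sum_insert hnot]
    exact IIL_add (h a (Finset.mem_insert_self a s'))
      (ih fun b hb => h b (Finset.mem_insert_of_mem hb))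

lemma coeff_Ppoly_IIL (d : ℕ) (f : Polynomial Fq) (hdeg : f.natDegree = d)
    (hqiv : ∀ m : ℤ, IsIntLaurent (f.eval (qint m))) (m : ℕ) :
    IsIntLaurent ((Ppoly d f).coeff m) := by
  rw [coeff_Ppoly d f hdeg m]
  exact IIL_sum _ _ fun jk _ => IIL_mul (IIL_toRat _) (hqiv jk.2)

lemma psOfN_eq (N : Polynomial (Polynomial ℤ)) :
    psOfN N = ((ψ N : Polynomial Fq) : PowerSeries Fq) := by
  have : (Polynomial.eval₂RingHom ((PowerSeries.C (R := Fq)).comp toRat) PowerSeries.X)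
      = Polynomial.coeToPowerSeries.ringHom.comp ψ := by
    apply Polynomial.ringHom_ext
    · intro p
      simp [ψ, Polynomial.coeToPowerSeries.ringHom_apply, Polynomial.coe_C]
    · simp [ψ, Polynomial.coeToPowerSeries.ringHom_apply, Polynomial.coe_X]
  have h2 := DFunLike.congr_fun this N
  simpa [psOfN, Polynomial.coeToPowerSeries.ringHom_apply] using h2

/-- Packaging: a polynomial with Laurent-integer coefficients. -/
lemma exists_N (d : ℕ) (P : Polynomial Fq) (hP : P.natDegree ≤ d)
    (h : ∀ m, IsIntLaurent (P.coeff m)) :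
    ∃ (N : Polynomial (Polynomial ℤ)) (k : ℕ), N.natDegree ≤ d ∧
      ψ N = Polynomial.C ((qq : Fq) ^ k) * P := by
  choose p k hpk using h
  set K := (Finset.range (d + 1)).sup k with hK
  refine ⟨∑ m ∈ Finset.range (d + 1),
    Polynomial.C (Polynomial.X ^ (K - k m) * p m) * Polynomial.X ^ m, K, ?_, ?_⟩
  · refine Polynomial.natDegree_sum_le_of_forall_le _ _ fun m hm => ?_
    refine le_trans (Polynomial.natDegree_C_mul_le _ _) ?_
    rw [Polynomial.natDegree_X_pow]
    exact Nat.lt_succ_iff.mp (Finset.mem_range.mp hm)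
  · have hPsum : P = ∑ m ∈ Finset.range (d + 1), Polynomial.C (P.coeff m) * Polynomial.X ^ m := by
      conv_lhs => rw [Polynomial.as_sum_range' P (d + 1) (by omega)]
      exact Finset.sum_congr rfl fun m _ => (Polynomial.C_mul_X_pow_eq_monomial).symm
    rw [map_sum, hPsum, Finset.mul_sum]
    refine Finset.sum_congr rfl fun m hm => ?_
    rw [ψ, Polynomial.coe_mapRingHom, Polynomial.map_mul, Polynomial.map_C,
      Polynomial.map_pow, Polynomial.map_X, map_mul, toRat_X_pow]
    have hkK : k m ≤ K := Finset.le_sup hm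
    have hz : (qq : Fq) ^ K * qq ^ (-(k m : ℤ)) = qq ^ (K - k m) := by
      rw [← zpow_natCast qq K, ← zpow_add₀ qq_ne_zero, ← zpow_natCast qq (K - k m)]
      congr 1
      push_cast [Nat.cast_sub hkK]
      ring
    have : (qq : Fq) ^ (K - k m) * toRat (p m) = qq ^ K * P.coeff m := by
      rw [hpk m, ← mul_assoc, hz]
    rw [this, ← mul_assoc, ← Polynomial.C_mul]

lemma exists_N0 (d : ℕ) (P : Polynomial Fq) (hP : P.natDegree ≤ d)
    (h : ∀ m, ∃ p, P.coeff m = toRat p) :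
    ∃ N : Polynomial (Polynomial ℤ), N.natDegree ≤ d ∧ ψ N = P := by
  choose p hp using h
  refine ⟨∑ m ∈ Finset.range (d + 1), Polynomial.C (p m) * Polynomial.X ^ m, ?_, ?_⟩
  · refine Polynomial.natDegree_sum_le_of_forall_le _ _ fun m hm => ?_
    refine le_trans (Polynomial.natDegree_C_mul_le _ _) ?_
    rw [Polynomial.natDegree_X_pow]
    exact Nat.lt_succ_iff.mp (Finset.mem_range.mp hm)
  · have hPsum : P = ∑ m ∈ Finset.range (d + 1), Polynomial.C (P.coeff m) * Polynomial.X ^ m := by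
      conv_lhs => rw [Polynomial.as_sum_range' P (d + 1) (by omega)]
      exact Finset.sum_congr rfl fun m _ => (Polynomial.C_mul_X_pow_eq_monomial).symm
    rw [map_sum]
    conv_rhs => rw [hPsum]
    refine Finset.sum_congr rfl fun m _ => ?_
    rw [ψ, Polynomial.coe_mapRingHom, Polynomial.map_mul, Polynomial.map_C,
      Polynomial.map_pow, Polynomial.map_X, hp m]

lemma coeff_Ppoly_int (d : ℕ) (f : Polynomial Fq) (hdeg : f.natDegree = d)
    (hint : ∀ m : ℕ, ∃ p : Polynomial ℤ, f.eval (qint m) = toRat p) (m : ℕ) :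
    ∃ p, (Ppoly d f).coeff m = toRat p := by
  choose p hp using hint
  refine ⟨∑ jk ∈ Finset.HasAntidiagonal.antidiagonal m, (Dz d).coeff jk.1 * p jk.2, ?_⟩
  rw [coeff_Ppoly d f hdeg m, map_sum]
  exact Finset.sum_congr rfl fun jk _ => by rw [map_mul, hp]

/-- For a quantum integer-valued `f ∈ ℚ(q)[t]` of `t`-degree `d`, there is
`N(t,q) ∈ ℤ[t,q,q^{−1}]` (encoded as `q^{−k}·N` with `N ∈ ℤ[t,q]`) of `t`-degree at most `d`
with `(∏_{i=0}^{d}(1−tq^i))·Σ_{n≥0} f([n]_q)t^n = N(t,q)`; and if moreover `f([n]_q) ∈ ℤ[q]`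
for all `n ≥ 0`, then one can take `N(t,q) ∈ ℤ[t,q]`. -/
theorem stmt5 (d : ℕ) (f : Polynomial Fq) (hdeg : f.natDegree = d)
    (hqiv : ∀ m : ℤ, IsIntLaurent (f.eval (qint m))) :
    (∃ (N : Polynomial (Polynomial ℤ)) (k : ℕ), N.natDegree ≤ d ∧
      psDen d * PowerSeries.mk (fun m => f.eval (qint m)) =
        PowerSeries.C (R := Fq) (qq ^ (-(k : ℤ))) * psOfN N) ∧
    ((∀ m : ℕ, ∃ p : Polynomial ℤ, f.eval (qint m) = toRat p) →
      ∃ N : Polynomial (Polynomial ℤ), N.natDegree ≤ d ∧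
        psDen d * PowerSeries.mk (fun m => f.eval (qint m)) = psOfN N) := by
  constructor
  · obtain ⟨N, k, hNdeg, hψ⟩ := exists_N d (Ppoly d f) (Ppoly_natDegree d f)
      (coeff_Ppoly_IIL d f hdeg hqiv)
    refine ⟨N, k, hNdeg, ?_⟩
    rw [main_eq d f hdeg, psOfN_eq, hψ, Polynomial.coe_mul, Polynomial.coe_C,
      ← mul_assoc, ← map_mul]
    have h1 : (qq : Fq) ^ (-(k : ℤ)) * qq ^ k = 1 := by
      rw [← zpow_natCast qq k, ← zpow_add₀ qq_ne_zero]
      simp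
    rw [h1, map_one, one_mul]
  · intro hint
    obtain ⟨N, hNdeg, hψ⟩ := exists_N0 d (Ppoly d f) (Ppoly_natDegree d f)
      (coeff_Ppoly_int d f hdeg hint)
    exact ⟨N, hNdeg, by rw [main_eq d f hdeg, psOfN_eq, hψ]⟩
end
end

section
/- Let v ∈ L_ℝ ∩ ℤ^n be a primitive cocircuit vector (primitive: αv ∉ ℤ^n for all real 0 < α < 1), and let c ∈ ℝ^d be the unique vector with Aᵀc = v. Then (max_{x∈Z} ⟨c,x⟩) − (min_{x∈Z} ⟨c,x⟩) = m(v), where m(v) is the number of nonzero coordinates of v. Moreover, the sets {x ∈ Z : ⟨c,x⟩ = max_{y∈Z}⟨c,y⟩} and {x ∈ Z : ⟨c,x⟩ = min_{y∈Z}⟨c,y⟩} are facets of Z, i.e., faces of Z whose affine span has dimension d−1. -/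
noncomputable section

/-- The zonotope `Z = A · [0,1]^n ⊆ ℝ^d`. -/
def zonotope (d n : ℕ) (A : Matrix (Fin d) (Fin n) ℤ) : Set (Fin d → ℝ) :=
  {x | ∃ t : Fin n → ℝ, (∀ j, t j ∈ Set.Icc (0 : ℝ) 1) ∧ ∀ i, x i = ∑ j, (A i j : ℝ) * t j}

/-- `A` is unimodular: all maximal (`d × d`) minors lie in `{-1,0,1}`. -/
def Unimodular (d n : ℕ) (A : Matrix (Fin d) (Fin n) ℤ) : Prop :=
  ∀ g : Fin d → Fin n, (A.submatrix id g).det ∈ ({-1, 0, 1} : Set ℤ)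

open scoped Classical

open Module Submodule Set Matrix

theorem helper1 {K : Type*} [Field K] (d n : ℕ) (M : Matrix (Fin d) (Fin n) K) (T : Set (Fin n))
    (hspan : Submodule.span K ((fun j => Mᵀ j) '' T) = ⊤) :
    ∃ g : Fin d → Fin n, (∀ k, g k ∈ T) ∧ IsUnit (M.submatrix id g).det := by
  obtain ⟨b, hbT, hbspan, hbli⟩ := exists_linearIndependent K ((fun j => Mᵀ j) '' T)
  rw [hspan] at hbspan
  have hfin : b.Finite := hbli.setFinite
  have : Fintype b := hfin.fintype
  have hcard : Fintype.card b = d := by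
    have h1 := finrank_span_set_eq_card hbli
    rw [hbspan] at h1
    simp [Set.toFinset_card] at h1
    have := Nat.card_coe_set_eq b
    rw [Nat.card_eq_fintype_card] at this
    omega
  have e : Fin d ≃ b := (Fintype.equivFinOfCardEq hcard).symm
  have hpre : ∀ k : Fin d, ∃ j, j ∈ T ∧ Mᵀ j = (e k).1 := by
    intro k
    have : ((e k).1) ∈ (fun j => Mᵀ j) '' T := hbT (e k).2
    obtain ⟨j, hj, hje⟩ := this
    exact ⟨j, hj, hje⟩
  choose g hgT hge using hpre
  refine ⟨g, hgT, ?_⟩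
  rw [← Matrix.isUnit_iff_isUnit_det, ← Matrix.linearIndependent_cols_iff_isUnit]
  have hcols : (fun k => (M.submatrix id g)ᵀ k) = fun k => ((e k).1) := by
    funext k
    rw [← hge k]; rfl
  rw [show (M.submatrix id g).col = fun k => ((e k).1) from hcols]
  exact hbli.comp (fun k => e k) e.injective

theorem helper2 (d n : ℕ) (A : Matrix (Fin d) (Fin n) ℤ)
    (hrank : (A.map (fun a => (a : ℚ))).rank = d) :
    ∀ b : Fin d → ℝ, (∀ j, ∑ i, b i * (A i j : ℝ) = 0) → b = 0 := by
  set Mq := A.map (fun a => (a : ℚ)) with hMq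
  have hspan : Submodule.span ℚ ((fun j => Mqᵀ j) '' (Set.univ : Set (Fin n))) = ⊤ := by
    rw [Set.image_univ]
    apply Submodule.eq_top_of_finrank_eq
    rw [show (fun j => Mqᵀ j) = Mq.col from rfl, ← Matrix.rank_eq_finrank_span_cols, hrank]
    simp [Module.finrank_fintype_fun_eq_card]
  obtain ⟨g, -, hdetq⟩ := helper1 d n Mq Set.univ hspan
  have hsub : Mq.submatrix id g = (A.submatrix id g).map (fun a => (a : ℚ)) := by
    ext i k; simp [hMq, Matrix.submatrix, Matrix.map]
  have hdz : (A.submatrix id g).det ≠ 0 := by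
    intro h0
    have hm := RingHom.map_det (Int.castRingHom ℚ) (A.submatrix id g)
    simp only [RingHom.mapMatrix_apply, Int.coe_castRingHom] at hm
    rw [hsub, ← hm] at hdetq
    simp [h0] at hdetq
  have hdetr : IsUnit ((A.submatrix id g).map (fun a => (a : ℝ))).det := by
    have hm := RingHom.map_det (Int.castRingHom ℝ) (A.submatrix id g)
    simp only [RingHom.mapMatrix_apply, Int.coe_castRingHom] at hm
    rw [← hm]
    simp [isUnit_iff_ne_zero, hdz]
  intro b hb
  have hinj : Function.Injective ((A.submatrix id g).map (fun a => (a : ℝ))).vecMul :=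
    Matrix.vecMul_injective_iff_isUnit.mpr (Matrix.isUnit_iff_isUnit_det _ |>.mpr hdetr)
  have h0 : ((A.submatrix id g).map (fun a => (a : ℝ))).vecMul b
      = ((A.submatrix id g).map (fun a => (a : ℝ))).vecMul 0 := by
    funext k
    simp [Matrix.vecMul, dotProduct, Matrix.submatrix, Matrix.map, hb (g k)]
  exact hinj h0

theorem helper3 (d n : ℕ) (A : Matrix (Fin d) (Fin n) ℤ)
    (hInj : ∀ b : Fin d → ℝ, (∀ j, ∑ i, b i * (A i j : ℝ) = 0) → b = 0)
    (v : Fin n → ℤ) (c : Fin d → ℝ)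
    (hvc : ∀ j, (v j : ℝ) = ∑ i, c i * (A i j : ℝ))
    (hv0 : v ≠ 0)
    (hcocirc : ∀ w : Fin n → ℝ,
      (∃ b : Fin d → ℝ, ∀ j, w j = ∑ i, b i * (A i j : ℝ)) → w ≠ 0 →
      {j | w j ≠ 0} ⊆ {j | v j ≠ 0} → {j | w j ≠ 0} = {j | v j ≠ 0}) :
    Module.finrank ℝ (Submodule.span ℝ
      (Set.range (fun j : {j : Fin n // v j = 0} => fun i => (A i (j : Fin n) : ℝ)))) = d - 1 := by
  -- c ≠ 0
  have hc0 : c ≠ 0 := by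
    intro h
    apply hv0
    funext j
    have h2 := hvc j
    rw [h] at h2
    simp at h2
    exact_mod_cast h2
  set J := {j : Fin n // v j = 0} with hJ
  set N : Matrix (Fin d) J ℝ := fun i j => (A i (j : Fin n) : ℝ) with hN
  have hker : LinearMap.ker Nᵀ.mulVecLin = Submodule.span ℝ {c} := by
    apply le_antisymm
    · intro b hb
      rw [LinearMap.mem_ker] at hb
      set w : Fin n → ℝ := fun j => ∑ i, b i * (A i j : ℝ) with hw
      have hwSc : ∀ j, v j = 0 → w j = 0 := by
        intro j hj
        have := congr_fun hb ⟨j, hj⟩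
        simp [Matrix.mulVecLin, Matrix.mulVec, dotProduct, hN, mul_comm] at this
        exact this
      obtain ⟨j1, hj1⟩ : ∃ j1, v j1 ≠ 0 := Function.ne_iff.mp hv0
      set lam : ℝ := w j1 / (v j1 : ℝ) with hlam
      set b' : Fin d → ℝ := b - lam • c with hb'
      set w' : Fin n → ℝ := fun j => w j - lam * (v j : ℝ) with hw'
      have hvj1 : ((v j1 : ℝ)) ≠ 0 := Int.cast_ne_zero.mpr hj1
      have hw'rep : ∀ j, w' j = ∑ i, b' i * (A i j : ℝ) := by
        intro j
        simp only [hw', hb', hw, Pi.sub_apply, Pi.smul_apply, smul_eq_mul, sub_mul,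
          Finset.sum_sub_distrib, hvc j, Finset.mul_sum]
        ring_nf
      have hw'j1 : w' j1 = 0 := by
        simp [hw', hlam, div_mul_cancel₀ _ hvj1]
      have hw'0 : w' = 0 := by
        by_contra hne
        have hsub : {j | w' j ≠ 0} ⊆ {j | v j ≠ 0} := by
          intro j hj
          by_contra hvj
          simp only [Set.mem_setOf_eq, not_not] at hvj
          apply hj
          simp [hw', hwSc j hvj, hvj]
        have heq := hcocirc w' ⟨b', hw'rep⟩ hne hsub
        have : j1 ∈ {j | w' j ≠ 0} := heq ▸ hj1
        exact this hw'j1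
      have hb'0 : b' = 0 := by
        apply hInj
        intro j
        rw [← hw'rep j, hw'0]
        rfl
      have : b = lam • c := by
        have := sub_eq_zero.mp hb'0
        simpa using this
      rw [this]
      exact Submodule.smul_mem _ _ (Submodule.mem_span_singleton_self c)
    · rw [Submodule.span_le, Set.singleton_subset_iff]
      rw [SetLike.mem_coe, LinearMap.mem_ker]
      funext j
      have : ((v (j : Fin n) : ℝ)) = 0 := by
        simp [j.2]
      simp only [Matrix.mulVecLin_apply, Matrix.mulVec, dotProduct]
      calc ∑ i, Nᵀ j i * c i = ∑ i, c i * (A i (j : Fin n) : ℝ) := by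
            apply Finset.sum_congr rfl; intro i _
            exact mul_comm _ _
        _ = 0 := by rw [← hvc]; exact this
  have hrn := LinearMap.finrank_range_add_finrank_ker Nᵀ.mulVecLin
  have hkr : Module.finrank ℝ (LinearMap.ker Nᵀ.mulVecLin) = 1 := by
    rw [hker]; exact finrank_span_singleton hc0
  have hdom : Module.finrank ℝ (Fin d → ℝ) = d := by
    simp [Module.finrank_fintype_fun_eq_card]
  rw [hkr, hdom] at hrn
  have hrt : Nᵀ.rank = Module.finrank ℝ (LinearMap.range Nᵀ.mulVecLin) := rfl
  have h1 : N.rank = d - 1 := by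
    rw [← Matrix.rank_transpose, hrt]
    omega
  have h2 : N.rank = Module.finrank ℝ (Submodule.span ℝ (Set.range Nᵀ)) :=
    Matrix.rank_eq_finrank_span_cols N
  rw [h2] at h1
  exact h1

theorem helper4 (d n : ℕ) (A : Matrix (Fin d) (Fin n) ℤ)
    (v : Fin n → ℤ) (c : Fin d → ℝ)
    (hvc : ∀ j, (v j : ℝ) = ∑ i, c i * (A i j : ℝ))
    (hd : 0 < d)
    (hW : Module.finrank ℝ (Submodule.span ℝ
      ((fun j => fun i => (A i j : ℝ)) '' {j : Fin n | v j = 0})) = d - 1)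
    (j0 : Fin n) (hj0 : v j0 ≠ 0) :
    Submodule.span ℝ ((fun j => fun i => (A i j : ℝ)) '' (insert j0 {j : Fin n | v j = 0})) = ⊤ := by
  set col : Fin n → (Fin d → ℝ) := fun j => fun i => (A i j : ℝ) with hcol
  set W : Submodule ℝ (Fin d → ℝ) := Submodule.span ℝ (col '' {j : Fin n | v j = 0}) with hWdef
  set φ : (Fin d → ℝ) →ₗ[ℝ] ℝ := ∑ i, c i • LinearMap.proj i with hφ
  have hφapp : ∀ x : Fin d → ℝ, φ x = ∑ i, c i * x i := by
    intro x
    simp [hφ, LinearMap.sum_apply]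
  have hφcol : ∀ j, φ (col j) = (v j : ℝ) := by
    intro j
    rw [hφapp, hcol, hvc]
  have hWker : W ≤ LinearMap.ker φ := by
    rw [hWdef, Submodule.span_le]
    rintro x ⟨j, hj, rfl⟩
    simp only [SetLike.mem_coe, LinearMap.mem_ker, hφcol]
    exact_mod_cast hj
  have hnotmem : col j0 ∉ W := by
    intro h
    have := hWker h
    rw [LinearMap.mem_ker, hφcol] at this
    exact hj0 (by exact_mod_cast this)
  have hlt : W < Submodule.span ℝ (col '' insert j0 {j : Fin n | v j = 0}) := by
    constructor
    · exact Submodule.span_mono (Set.image_mono (Set.subset_insert _ _))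
    · intro hle
      exact hnotmem (hle (Submodule.subset_span ⟨j0, Set.mem_insert _ _, rfl⟩))
  have hfr := Submodule.finrank_lt_finrank_of_lt hlt
  rw [hW] at hfr
  apply Submodule.eq_top_of_finrank_eq
  have hle := Submodule.finrank_le (Submodule.span ℝ (col '' insert j0 {j : Fin n | v j = 0}))
  simp only [Module.finrank_fintype_fun_eq_card, Fintype.card_fin] at hle ⊢
  omega

theorem helper5 (d n : ℕ) (A : Matrix (Fin d) (Fin n) ℤ)
    (hA : Unimodular d n A)
    (v : Fin n → ℤ) (c : Fin d → ℝ)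
    (hvc : ∀ j, (v j : ℝ) = ∑ i, c i * (A i j : ℝ))
    (hprim : ∀ α : ℝ, 0 < α → α < 1 → ¬ ∃ w : Fin n → ℤ, ∀ j, (w j : ℝ) = α * (v j : ℝ))
    (hspans : ∀ j0 : Fin n, v j0 ≠ 0 →
      Submodule.span ℝ ((fun j => fun i => (A i j : ℝ)) ''
        (insert j0 {j : Fin n | v j = 0})) = ⊤) :
    ∀ j0, v j0 ≠ 0 → v j0 = 1 ∨ v j0 = -1 := by
  intro j0 hj0
  set Ar : Matrix (Fin d) (Fin n) ℝ := A.map (fun a => (a : ℝ)) with hAr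
  have hsp : Submodule.span ℝ ((fun j => Arᵀ j) '' (insert j0 {j : Fin n | v j = 0})) = ⊤ := by
    have := hspans j0 hj0
    convert this using 2
    rfl
  obtain ⟨g, hgT, hdet⟩ := helper1 d n Ar (insert j0 {j : Fin n | v j = 0}) hsp
  set B : Matrix (Fin d) (Fin d) ℤ := A.submatrix id g with hB
  have hsubeq : Ar.submatrix id g = B.map (fun a => (a : ℝ)) := by
    ext i k; simp [hAr, hB]
  have hm := RingHom.map_det (Int.castRingHom ℝ) B
  simp only [RingHom.mapMatrix_apply, Int.coe_castRingHom] at hm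
  have hdetB : IsUnit B.det := by
    rcases hA g with h | h | h
    · rw [hB, h]; exact isUnit_one.neg
    · exfalso
      rw [hsubeq, ← hm, hB, h] at hdet
      simp at hdet
    · rw [hB, h]; exact isUnit_one
  have : Invertible B := B.invertibleOfIsUnitDet hdetB
  set u : Fin d → ℤ := fun k => if g k = j0 then 1 else 0 with hu
  set m : Fin d → ℤ := Matrix.vecMul u (⅟B) with hmdef
  set wI : Fin n → ℤ := Matrix.vecMul m A with hwI
  -- key divisibility
  have hkey : ∀ j, v j = v j0 * wI j := by
    have hdetBr : IsUnit (B.map (fun a => (a : ℝ))).det := by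
      rw [← hm]; exact hdetB.map (Int.castRingHom ℝ)
    have hinj : Function.Injective (B.map (fun a => (a : ℝ))).vecMul :=
      Matrix.vecMul_injective_iff_isUnit.mpr (Matrix.isUnit_iff_isUnit_det _ |>.mpr hdetBr)
    set cI : Fin d → ℝ := fun i => (v j0 : ℝ) * ((m i : ℤ) : ℝ) with hcI
    have hstep1 : (B.map (fun a => (a : ℝ))).vecMul cI = (B.map (fun a => (a : ℝ))).vecMul c := by
      funext k
      have hrhs : (B.map (fun a => (a : ℝ))).vecMul c k = ((v (g k) : ℤ) : ℝ) := by
        simp only [Matrix.vecMul, dotProduct, Matrix.map_apply, hB, Matrix.submatrix_apply,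
          id_eq]
        rw [hvc (g k)]
      have hmul : Matrix.vecMul m B = u := by
        rw [hmdef, Matrix.vecMul_vecMul, invOf_mul_self, Matrix.vecMul_one]
      have hlhs : (B.map (fun a => (a : ℝ))).vecMul cI k
          = (v j0 : ℝ) * (((Matrix.vecMul m B) k : ℤ) : ℝ) := by
        simp only [Matrix.vecMul, dotProduct, Matrix.map_apply, hcI]
        push_cast
        rw [Finset.mul_sum]
        apply Finset.sum_congr rfl; intro i _; ring
      rw [hlhs, hmul, hrhs]
      rcases hgT k with h | h
      · rw [h]; simp [hu, h]
      · simp only [Set.mem_setOf_eq] at h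
        rw [h]
        have : g k ≠ j0 := by
          intro hgk; rw [hgk] at h; exact hj0 h
        simp [hu, this]
    have hceq : cI = c := hinj hstep1
    intro j
    have : ((v j : ℤ) : ℝ) = ((v j0 * wI j : ℤ) : ℝ) := by
      rw [hvc j, ← hceq]
      simp only [hcI, hwI, Matrix.vecMul, dotProduct]
      push_cast
      rw [Finset.mul_sum]
      apply Finset.sum_congr rfl; intro i _; ring
    exact_mod_cast this
  -- primitivity
  by_contra hcon
  push_neg at hcon
  have habs : 2 ≤ |v j0| := by
    rcases hcon with ⟨h1, h2⟩
    rcases abs_cases (v j0) with ⟨he, _⟩ | ⟨he, _⟩ <;> omega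
  set α : ℝ := (|v j0| : ℝ)⁻¹ with hα
  have habsr : (2 : ℝ) ≤ (|v j0| : ℝ) := by exact_mod_cast habs
  have hαpos : 0 < α := by positivity
  have hα1 : α < 1 := by
    rw [hα, inv_lt_one_iff₀]
    right; linarith
  apply hprim α hαpos hα1
  set s : ℤ := if 0 ≤ v j0 then 1 else -1 with hs
  refine ⟨fun j => s * wI j, fun j => ?_⟩
  have hsv : ((|v j0| : ℤ) : ℝ)⁻¹ * ((v j0 : ℤ) : ℝ) = (s : ℝ) := by
    rcases le_or_gt 0 (v j0) with h | h
    · rw [hs, if_pos h, abs_of_nonneg h]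
      push_cast
      field_simp
    · rw [hs, if_neg (not_le.mpr h), abs_of_neg h]
      push_cast
      have : ((v j0 : ℤ) : ℝ) ≠ 0 := Int.cast_ne_zero.mpr hj0
      field_simp
  calc ((s * wI j : ℤ) : ℝ) = (s : ℝ) * (wI j : ℝ) := by push_cast; ring
    _ = ((|v j0| : ℤ) : ℝ)⁻¹ * ((v j0 : ℤ) : ℝ) * (wI j : ℝ) := by rw [hsv]
    _ = α * (v j : ℝ) := by
        rw [hkey j]
        push_cast
        ring

theorem helper6 (d n : ℕ) (A : Matrix (Fin d) (Fin n) ℤ)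
    (v : Fin n → ℤ) (c : Fin d → ℝ)
    (hvc : ∀ j, (v j : ℝ) = ∑ i, c i * (A i j : ℝ)) :
    IsGreatest ((fun x => ∑ i, c i * x i) '' zonotope d n A)
      (∑ j ∈ Finset.univ.filter (fun j => 0 < v j), ((v j : ℝ))) ∧
    vectorSpan ℝ {x ∈ zonotope d n A | ∑ i, c i * x i =
        ∑ j ∈ Finset.univ.filter (fun j => 0 < v j), ((v j : ℝ))} =
      Submodule.span ℝ ((fun j => fun i => (A i j : ℝ)) '' {j : Fin n | v j = 0}) := by
  set Mx : ℝ := ∑ j ∈ Finset.univ.filter (fun j => 0 < v j), ((v j : ℝ)) with hMx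
  have hfA : ∀ (t : Fin n → ℝ) (x : Fin d → ℝ), (∀ i, x i = ∑ j, (A i j : ℝ) * t j) →
      ∑ i, c i * x i = ∑ j, (v j : ℝ) * t j := by
    intro t x hx
    calc ∑ i, c i * x i = ∑ i, ∑ j, c i * ((A i j : ℝ) * t j) := by
          apply Finset.sum_congr rfl; intro i _; rw [hx i, Finset.mul_sum]
      _ = ∑ j, ∑ i, c i * ((A i j : ℝ) * t j) := Finset.sum_comm
      _ = ∑ j, (v j : ℝ) * t j := by
          apply Finset.sum_congr rfl; intro j _
          rw [hvc j, Finset.sum_mul]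
          apply Finset.sum_congr rfl; intro i _; ring
  have hterm : ∀ (t : Fin n → ℝ), (∀ j, t j ∈ Set.Icc (0:ℝ) 1) →
      ∀ j ∈ Finset.univ, (v j : ℝ) * t j ≤ if 0 < v j then (v j : ℝ) else 0 := by
    intro t ht j _
    rcases (ht j) with ⟨h0, h1⟩
    by_cases hj : 0 < v j
    · rw [if_pos hj]
      have : (0:ℝ) ≤ (v j : ℝ) := by exact_mod_cast hj.le
      nlinarith
    · rw [if_neg hj]
      have : (v j : ℝ) ≤ 0 := by exact_mod_cast (not_lt.mp hj)
      nlinarith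
  have hub : ∀ (t : Fin n → ℝ), (∀ j, t j ∈ Set.Icc (0:ℝ) 1) →
      ∑ j, (v j : ℝ) * t j ≤ Mx := by
    intro t ht
    calc ∑ j, (v j : ℝ) * t j ≤ ∑ j, if 0 < v j then (v j : ℝ) else 0 :=
          Finset.sum_le_sum (hterm t ht)
      _ = Mx := by rw [hMx, Finset.sum_filter]
  set t0 : Fin n → ℝ := fun j => if 0 < v j then 1 else 0 with ht0def
  have ht0 : ∀ j, t0 j ∈ Set.Icc (0:ℝ) 1 := by
    intro j; rw [ht0def]; dsimp only; split <;> norm_num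
  set x0 : Fin d → ℝ := fun i => ∑ j, (A i j : ℝ) * t0 j with hx0def
  have hx0mem : x0 ∈ zonotope d n A := ⟨t0, ht0, fun i => rfl⟩
  have hsum0 : ∑ j, (v j : ℝ) * t0 j = Mx := by
    rw [hMx, Finset.sum_filter]
    apply Finset.sum_congr rfl; intro j _
    rw [ht0def]; dsimp only; split <;> simp
  have hfx0 : ∑ i, c i * x0 i = Mx := by rw [hfA t0 x0 (fun i => rfl), hsum0]
  have hgreat : IsGreatest ((fun x => ∑ i, c i * x i) '' zonotope d n A) Mx := by
    constructor
    · exact ⟨x0, hx0mem, hfx0⟩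
    · rintro z ⟨x, ⟨t, ht, hxt⟩, rfl⟩
      dsimp only
      rw [hfA t x hxt]
      exact hub t ht
  refine ⟨hgreat, ?_⟩
  have htight : ∀ (t : Fin n → ℝ), (∀ j, t j ∈ Set.Icc (0:ℝ) 1) →
      (∑ j, (v j : ℝ) * t j = Mx) → ∀ j, v j ≠ 0 → t j = t0 j := by
    intro t ht heq j hj
    have := (Finset.sum_eq_sum_iff_of_le (hterm t ht)).mp (by
      rw [heq, hMx, Finset.sum_filter])
    have hj' := this j (Finset.mem_univ j)
    show t j = if 0 < v j then (1:ℝ) else 0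
    by_cases hpos : 0 < v j
    · rw [if_pos hpos] at hj' ⊢
      have hv : ((v j : ℝ)) ≠ 0 := by exact_mod_cast hj
      exact mul_left_cancel₀ hv (by rw [mul_one]; exact hj')
    · rw [if_neg hpos] at hj' ⊢
      have hv : ((v j : ℝ)) ≠ 0 := by exact_mod_cast hj
      exact (mul_eq_zero.mp hj').resolve_left hv
  apply le_antisymm
  · rw [vectorSpan, Submodule.span_le]
    rintro z hz
    rw [Set.mem_vsub] at hz
    obtain ⟨x, hx, y, hy, rfl⟩ := hz
    obtain ⟨⟨t, ht, hxt⟩, hfx⟩ := hx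
    obtain ⟨⟨t', ht', hyt⟩, hfy⟩ := hy
    have htt : ∀ j, v j ≠ 0 → t j - t' j = 0 := by
      intro j hj
      rw [htight t ht (by rw [← hfA t x hxt]; exact hfx) j hj,
        htight t' ht' (by rw [← hfA t' y hyt]; exact hfy) j hj, sub_self]
    have hrepr : x -ᵥ y = ∑ j ∈ Finset.univ.filter (fun j => v j = 0),
        (t j - t' j) • (fun i => (A i j : ℝ)) := by
      funext i
      have h1 : (x -ᵥ y) i = ∑ j, (A i j : ℝ) * (t j - t' j) := by
        simp only [vsub_eq_sub, Pi.sub_apply, hxt i, hyt i, ← Finset.sum_sub_distrib]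
        apply Finset.sum_congr rfl; intro j _; ring
      rw [h1, Finset.sum_apply]
      rw [← Finset.sum_filter_of_ne (s := Finset.univ) (p := fun j => v j = 0)
        (f := fun j => (A i j : ℝ) * (t j - t' j)) (by
          intro j _ hne
          by_contra hvj
          exact hne (show (A i j : ℝ) * (t j - t' j) = 0 by rw [htt j hvj, mul_zero]))]
      apply Finset.sum_congr rfl; intro j _
      simp [mul_comm]
    rw [SetLike.mem_coe, hrepr]
    apply Submodule.sum_mem
    intro j hj
    apply Submodule.smul_mem
    apply Submodule.subset_span
    exact ⟨j, by simpa using hj, rfl⟩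
  · rw [Submodule.span_le]
    rintro z ⟨j, hj, rfl⟩
    simp only [Set.mem_setOf_eq] at hj
    set t1 : Fin n → ℝ := fun j' => t0 j' + if j' = j then 1 else 0 with ht1def
    have ht1 : ∀ j', t1 j' ∈ Set.Icc (0:ℝ) 1 := by
      intro j'
      rw [ht1def]; dsimp only
      by_cases hjj : j' = j
      · subst hjj
        have : ¬ (0 < v j') := by rw [hj]; omega
        simp [ht0def, this]
      · simp only [if_neg hjj, add_zero]
        exact ht0 j'
    set x1 : Fin d → ℝ := fun i => ∑ j', (A i j' : ℝ) * t1 j' with hx1def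
    have hx1mem : x1 ∈ zonotope d n A := ⟨t1, ht1, fun i => rfl⟩
    have hfx1 : ∑ i, c i * x1 i = Mx := by
      rw [hfA t1 x1 (fun i => rfl)]
      rw [ht1def]
      dsimp only
      simp only [mul_add, Finset.sum_add_distrib]
      rw [hsum0]
      have : ∑ j', (v j' : ℝ) * (if j' = j then 1 else 0) = 0 := by
        rw [Finset.sum_eq_single j]
        · simp [hj]
        · intro b _ hb; simp [hb]
        · intro h; exact absurd (Finset.mem_univ j) h
      rw [this, add_zero]
    have hcol : (fun i => (A i j : ℝ)) = x1 -ᵥ x0 := by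
      funext i
      simp only [vsub_eq_sub, Pi.sub_apply, hx1def, hx0def, ht1def, mul_add,
        Finset.sum_add_distrib, add_sub_cancel_left]
      rw [Finset.sum_eq_single j]
      · simp
      · intro b _ hb; simp [hb]
      · intro h; exact absurd (Finset.mem_univ j) h
    show (fun i => (A i j : ℝ)) ∈ (vectorSpan ℝ {x ∈ zonotope d n A | ∑ i, c i * x i = Mx} : Set (Fin d → ℝ))
    rw [hcol]
    exact vsub_mem_vectorSpan ℝ ⟨hx1mem, hfx1⟩ ⟨hx0mem, hfx0⟩

theorem helper7 (d : ℕ) (Z : Set (Fin d → ℝ)) (c : Fin d → ℝ) (M : ℝ)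
    (hM : IsGreatest ((fun x => ∑ i, c i * x i) '' Z) M) :
    IsExposed ℝ Z {x ∈ Z | ∑ i, c i * x i = M} := by
  intro hne
  set φ : (Fin d → ℝ) →ₗ[ℝ] ℝ := ∑ i, c i • LinearMap.proj i with hφdef
  refine ⟨LinearMap.toContinuousLinearMap φ, ?_⟩
  have hφ : ∀ x, LinearMap.toContinuousLinearMap φ x = ∑ i, c i * x i := by
    intro x
    simp [hφdef, LinearMap.sum_apply]
  ext x
  constructor
  · rintro ⟨hxZ, hfx⟩
    exact ⟨hxZ, fun y hy => by rw [hφ, hφ, hfx]; exact hM.2 ⟨y, hy, rfl⟩⟩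
  · rintro ⟨hxZ, hall⟩
    refine ⟨hxZ, le_antisymm (hM.2 ⟨x, hxZ, rfl⟩) ?_⟩
    obtain ⟨x0, hx0Z, hfx0⟩ := hM.1
    have h := hall x0 hx0Z
    rw [hφ, hφ] at h
    rw [← hfx0]
    exact h


/-- Let `v ∈ L_ℝ ∩ ℤ^n` be a primitive cocircuit vector and `c ∈ ℝ^d` the
vector with `Aᵀc = v`. Then `max_{x∈Z}⟨c,x⟩ − min_{x∈Z}⟨c,x⟩ = m(v)`, and the argmax and
argmin sets are facets of `Z`: exposed faces whose affine span has dimension `d−1`. -/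
theorem stmt9 (d n : ℕ) (A : Matrix (Fin d) (Fin n) ℤ)
    (hrank : (A.map (fun a => (a : ℚ))).rank = d)
    (hA : Unimodular d n A)
    (v : Fin n → ℤ) (c : Fin d → ℝ)
    (hvc : ∀ j, (v j : ℝ) = ∑ i, c i * (A i j : ℝ))
    (hv0 : v ≠ 0)
    (hcocirc : ∀ w : Fin n → ℝ,
      (∃ b : Fin d → ℝ, ∀ j, w j = ∑ i, b i * (A i j : ℝ)) → w ≠ 0 →
      {j | w j ≠ 0} ⊆ {j | v j ≠ 0} → {j | w j ≠ 0} = {j | v j ≠ 0})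
    (hprim : ∀ α : ℝ, 0 < α → α < 1 → ¬ ∃ w : Fin n → ℤ, ∀ j, (w j : ℝ) = α * (v j : ℝ)) :
    ∃ Mx mn : ℝ,
      IsGreatest ((fun x => ∑ i, c i * x i) '' zonotope d n A) Mx ∧
      IsLeast ((fun x => ∑ i, c i * x i) '' zonotope d n A) mn ∧
      Mx - mn = ((Finset.univ.filter (fun j => v j ≠ 0)).card : ℝ) ∧
      IsExposed ℝ (zonotope d n A) {x ∈ zonotope d n A | ∑ i, c i * x i = Mx} ∧
      IsExposed ℝ (zonotope d n A) {x ∈ zonotope d n A | ∑ i, c i * x i = mn} ∧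
      Module.finrank ℝ
        (affineSpan ℝ {x ∈ zonotope d n A | ∑ i, c i * x i = Mx}).direction = d - 1 ∧
      Module.finrank ℝ
        (affineSpan ℝ {x ∈ zonotope d n A | ∑ i, c i * x i = mn}).direction = d - 1 := by
  have hd : 0 < d := by
    rcases Nat.eq_zero_or_pos d with hd0 | hd0
    · exfalso
      apply hv0
      funext j
      have h := hvc j
      subst hd0
      simp at h
      exact_mod_cast h
    · exact hd0
  have hInj := helper2 d n A hrank
  have hWrange := helper3 d n A hInj v c hvc hv0 hcocirc
  have hW : Module.finrank ℝ (Submodule.span ℝ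
      ((fun j => fun i => (A i j : ℝ)) '' {j : Fin n | v j = 0})) = d - 1 := by
    rw [Set.image_eq_range]
    exact hWrange
  have hspans : ∀ j0 : Fin n, v j0 ≠ 0 →
      Submodule.span ℝ ((fun j => fun i => (A i j : ℝ)) ''
        (insert j0 {j : Fin n | v j = 0})) = ⊤ :=
    fun j0 h => helper4 d n A v c hvc hd hW j0 h
  have hv1 := helper5 d n A hA v c hvc hprim hspans
  obtain ⟨hgreat, hspanMax⟩ := helper6 d n A v c hvc
  have hvc' : ∀ j, (((-v) j : ℤ) : ℝ) = ∑ i, (-c) i * (A i j : ℝ) := by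
    intro j
    have h : ∑ i, (-c) i * (A i j : ℝ) = -∑ i, c i * (A i j : ℝ) := by
      rw [← Finset.sum_neg_distrib]
      apply Finset.sum_congr rfl; intro i _; simp
    rw [h, ← hvc j]
    simp
  obtain ⟨hgreat', hspanMin'⟩ := helper6 d n A (-v) (-c) hvc'
  set Mx : ℝ := ∑ j ∈ Finset.univ.filter (fun j => 0 < v j), ((v j : ℝ)) with hMxdef
  set mn : ℝ := ∑ j ∈ Finset.univ.filter (fun j => v j < 0), ((v j : ℝ)) with hmndef
  have hfilt : Finset.univ.filter (fun j => 0 < (-v) j)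
      = Finset.univ.filter (fun j => v j < 0) := by
    apply Finset.filter_congr
    intro j _
    simp
  have hMx' : (∑ j ∈ Finset.univ.filter (fun j => 0 < (-v) j), (((-v) j : ℤ) : ℝ)) = -mn := by
    rw [hfilt, hmndef, ← Finset.sum_neg_distrib]
    apply Finset.sum_congr rfl; intro j _
    simp
  rw [hMx'] at hgreat' hspanMin'
  have hfneg : ∀ x : Fin d → ℝ, ∑ i, (-c) i * x i = -∑ i, c i * x i := by
    intro x
    rw [← Finset.sum_neg_distrib]
    apply Finset.sum_congr rfl; intro i _; simp
  have hsetmin : {x ∈ zonotope d n A | ∑ i, (-c) i * x i = -mn}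
      = {x ∈ zonotope d n A | ∑ i, c i * x i = mn} := by
    ext x
    constructor
    · rintro ⟨h1, h2⟩
      rw [hfneg x] at h2
      exact ⟨h1, by linarith⟩
    · rintro ⟨h1, h2⟩
      refine ⟨h1, ?_⟩
      rw [hfneg x, h2]
  have hleast : IsLeast ((fun x => ∑ i, c i * x i) '' zonotope d n A) mn := by
    constructor
    · obtain ⟨x0, hx0, hfx0⟩ := hgreat'.1
      refine ⟨x0, hx0, ?_⟩
      dsimp only at hfx0 ⊢
      rw [hfneg x0] at hfx0
      linarith
    · rintro z ⟨x, hx, rfl⟩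
      have h2 : (∑ i, (-c) i * x i) ≤ -mn := hgreat'.2 ⟨x, hx, rfl⟩
      rw [hfneg x] at h2
      dsimp only
      linarith
  have hnegset : {j : Fin n | (-v) j = 0} = {j : Fin n | v j = 0} := by
    ext j; simp
  have hcP : Mx = ((Finset.univ.filter (fun j => 0 < v j)).card : ℝ) := by
    rw [hMxdef]
    rw [Finset.sum_congr rfl (fun j hj => ?_), Finset.sum_const, nsmul_eq_mul, mul_one]
    simp only [Finset.mem_filter] at hj
    rcases hv1 j (by omega) with h | h
    · rw [h]; norm_num
    · exfalso; omega
  have hcN : mn = -((Finset.univ.filter (fun j => v j < 0)).card : ℝ) := by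
    rw [hmndef]
    rw [Finset.sum_congr rfl (fun j hj => ?_), Finset.sum_const, nsmul_eq_mul, mul_neg_one]
    · simp only [Finset.mem_filter] at hj
      rcases hv1 j (by omega) with h | h
      · exfalso; omega
      · rw [h]; norm_num
  have hcard : (Finset.univ.filter (fun j => v j ≠ 0)).card
      = (Finset.univ.filter (fun j => 0 < v j)).card
        + (Finset.univ.filter (fun j => v j < 0)).card := by
    rw [← Finset.card_union_of_disjoint (by
      rw [Finset.disjoint_left]
      intro j hj hj'
      simp only [Finset.mem_filter] at hj hj'
      omega)]
    congr 1
    ext j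
    simp only [Finset.mem_filter, Finset.mem_union, Finset.mem_univ, true_and]
    omega
  refine ⟨Mx, mn, hgreat, hleast, ?_, helper7 d (zonotope d n A) c Mx hgreat, ?_, ?_, ?_⟩
  · rw [hcP, hcN, hcard]
    push_cast
    ring
  · rw [← hsetmin]
    exact helper7 d (zonotope d n A) (-c) (-mn) hgreat'
  · rw [direction_affineSpan, hspanMax]
    exact hW
  · rw [direction_affineSpan, ← hsetmin, hspanMin', hnegset]
    exact hW
end
end

section
/- Let m ≥ 1 and let L(m) ⊆ ℂ^{m×n} be the image of L under the diagonal embedding v ↦ (v,…,v). The ℂ-linear map γ̃ from the span of the variables z_S (S ⊆ [m]×[n]) to ℂ[z_S : S ⊆ [n]] defined by γ̃(z_S) = ∏_{i=1}^m z_{S_{i,*}} maps the degree-one component of I_{L(m)}^SE into I_L^SE, and therefore induces a well-defined surjective ℂ-linear map γ : (R_{L(m)})_1 → (R_L)_m from the degree-1 graded component of R_{L(m)} := ℂ[z_S : S ⊆ [m]×[n]]/I_{L(m)}^SE onto the degree-m graded component of R_L := ℂ[z_S : S ⊆ [n]]/I_L^SE. -/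
open scoped Classical

noncomputable section

/-- `I` is independent in the matroid `M` of `L ⊆ ℂ^E`: the coordinate projection `pr_I`
maps `L` onto `ℂ^I`. -/
def Indep (E : Type) (L : Submodule ℂ (E → ℂ)) (I : Finset E) : Prop :=
  ∀ y : E → ℂ, ∃ x ∈ L, ∀ i ∈ I, x i = y i

/-- `C` is a circuit of the matroid of `L`: a minimal dependent set. -/
def IsCircuit (E : Type) (L : Submodule ℂ (E → ℂ)) (C : Finset E) : Prop :=
  ¬ Indep E L C ∧ ∀ C' ⊂ C, Indep E L C'

/-- `α` is valid circuit-coefficient data for `L`: for each circuit `C`, `(α C i)_{i∈C}` is a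
nonzero vector (unique up to scaling) such that `Σ_{i∈C} α_{C,i} x_i` vanishes on `L`. -/
def CircuitData (E : Type) (L : Submodule ℂ (E → ℂ)) (α : Finset E → E → ℂ) : Prop :=
  ∀ C : Finset E, IsCircuit E L C →
    (∃ i ∈ C, α C i ≠ 0) ∧ (∀ v ∈ L, ∑ i ∈ C, α C i * v i = 0)

/-- The ideal `I_L^SE ⊆ ℂ[z_S : S ⊆ E]`, generated by the binomials
`z_S z_T − z_{S∪T} z_{S∩T}` and the linear forms `f_C^A(z) = Σ_{i∈C} α_{C,i} z_{A∪{i}}`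
for circuits `C` and `A ⊆ E ∖ C`. -/
def SEIdeal (E : Type) [DecidableEq E] (L : Submodule ℂ (E → ℂ)) (α : Finset E → E → ℂ) :
    Ideal (MvPolynomial (Finset E) ℂ) :=
  Ideal.span
    ({p | ∃ S T : Finset E, p = MvPolynomial.X S * MvPolynomial.X T -
        MvPolynomial.X (S ∪ T) * MvPolynomial.X (S ∩ T)} ∪
     {p | ∃ C A : Finset E, IsCircuit E L C ∧ Disjoint A C ∧
        p = ∑ i ∈ C, MvPolynomial.C (α C i) * MvPolynomial.X (insert i A)})

/-- The `i`-th row `S_{i,*} ⊆ [n]` of a subset `S ⊆ [m]×[n]` viewed as a 0/1 matrix. -/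
def rowOf (m n : ℕ) (S : Finset (Fin m × Fin n)) (i : Fin m) : Finset (Fin n) :=
  (S.filter (fun p => p.1 = i)).image Prod.snd

/-- The `m`-thickening `L(m) ⊆ ℂ^{[m]×[n]}`: the image of `L` under the diagonal embedding. -/
def thickening (n m : ℕ) (L : Submodule ℂ (Fin n → ℂ)) :
    Submodule ℂ (Fin m × Fin n → ℂ) :=
  Submodule.map (LinearMap.funLeft ℂ ℂ (Prod.snd : Fin m × Fin n → Fin n)) L

/-- The algebra map `γ̃ : ℂ[z_S : S ⊆ [m]×[n]] → ℂ[z_S : S ⊆ [n]]`,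
`γ̃(z_S) = ∏_{i=1}^m z_{S_{i,*}}`. -/
def gammaTilde (m n : ℕ) :
    MvPolynomial (Finset (Fin m × Fin n)) ℂ →ₐ[ℂ] MvPolynomial (Finset (Fin n)) ℂ :=
  MvPolynomial.aeval (fun S : Finset (Fin m × Fin n) =>
    ∏ i : Fin m, MvPolynomial.X (rowOf m n S i))

/-! ### Auxiliary material for the proof of `stmt13` -/

namespace Stmt13Aux

set_option linter.unusedSectionVars false

open Finset

section Binomial

variable {β : Type} [Fintype β] [DecidableEq β]

/-- The set of binomial generators. -/
def binSet (β : Type) [DecidableEq β] : Set (MvPolynomial (Finset β) ℂ) :=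
  {p | ∃ S T : Finset β, p = MvPolynomial.X S * MvPolynomial.X T -
      MvPolynomial.X (S ∪ T) * MvPolynomial.X (S ∩ T)}

/-- The binomial ideal. -/
def Jb (β : Type) [DecidableEq β] : Ideal (MvPolynomial (Finset β) ℂ) :=
  Ideal.span (binSet β)

def prodX (M : Multiset (Finset β)) : MvPolynomial (Finset β) ℂ :=
  (M.map MvPolynomial.X).prod

def cnt (x : β) (M : Multiset (Finset β)) : ℕ := M.countP (fun S => x ∈ S)

lemma prodX_cons (S : Finset β) (M : Multiset (Finset β)) :
    prodX (S ::ₘ M) = MvPolynomial.X S * prodX M := by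
  simp [prodX]

lemma cnt_cons (x : β) (S : Finset β) (M : Multiset (Finset β)) :
    cnt x (S ::ₘ M) = cnt x M + (if x ∈ S then 1 else 0) := by
  simp [cnt, Multiset.countP_cons]

def IsChainM (M : Multiset (Finset β)) : Prop := ∀ S ∈ M, ∀ T ∈ M, S ⊆ T ∨ T ⊆ S

lemma exists_max (M : Multiset (Finset β)) (h0 : M ≠ 0) (hc : IsChainM M) :
    ∃ S ∈ M, ∀ T ∈ M, T ⊆ S := by
  induction M using Multiset.induction_on with
  | empty => exact absurd rfl h0
  | cons a M ih =>
    rcases eq_or_ne M 0 with rfl | hM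
    · exact ⟨a, Multiset.mem_cons_self a 0, by simp⟩
    · obtain ⟨S, hS, hmax⟩ := ih hM (fun S hS T hT =>
        hc S (Multiset.mem_cons_of_mem hS) T (Multiset.mem_cons_of_mem hT))
      rcases hc a (Multiset.mem_cons_self a M) S (Multiset.mem_cons_of_mem hS) with h | h
      · exact ⟨S, Multiset.mem_cons_of_mem hS, fun T hT => by
          rcases Multiset.mem_cons.1 hT with rfl | hT
          · exact h
          · exact hmax T hT⟩
      · exact ⟨a, Multiset.mem_cons_self a M, fun T hT => by
          rcases Multiset.mem_cons.1 hT with rfl | hT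
          · exact subset_rfl
          · exact (hmax T hT).trans h⟩

lemma chain_eq (M : Multiset (Finset β)) : ∀ N : Multiset (Finset β),
    IsChainM M → IsChainM N → Multiset.card M = Multiset.card N →
    (∀ x, cnt x M = cnt x N) → M = N := by
  induction M using Multiset.strongInductionOn with
  | ih M IH =>
  intro N hcM hcN hcard hcnt
  rcases eq_or_ne M 0 with rfl | hM0
  · have : Multiset.card N = 0 := by simpa using hcard.symm
    exact (Multiset.card_eq_zero.1 this).symm
  · have hN0 : N ≠ 0 := by
      intro h; subst h; simp only [Multiset.card_zero] at hcard
      exact hM0 (Multiset.card_eq_zero.1 hcard)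
    obtain ⟨S, hS, hmaxS⟩ := exists_max M hM0 hcM
    obtain ⟨S', hS', hmaxS'⟩ := exists_max N hN0 hcN
    have hmem : ∀ x, (x ∈ S ↔ 0 < cnt x M) := by
      intro x
      constructor
      · intro hx; exact Multiset.countP_pos.2 ⟨S, hS, hx⟩
      · intro hx; obtain ⟨T, hT, hxT⟩ := Multiset.countP_pos.1 hx
        exact hmaxS T hT hxT
    have hmem' : ∀ x, (x ∈ S' ↔ 0 < cnt x N) := by
      intro x
      constructor
      · intro hx; exact Multiset.countP_pos.2 ⟨S', hS', hx⟩
      · intro hx; obtain ⟨T, hT, hxT⟩ := Multiset.countP_pos.1 hx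
        exact hmaxS' T hT hxT
    have hSS' : S = S' := by
      ext x; rw [hmem x, hmem' x, hcnt x]
    subst hSS'
    have hMe : M = S ::ₘ M.erase S := (Multiset.cons_erase hS).symm
    have hNe : N = S ::ₘ N.erase S := (Multiset.cons_erase hS').symm
    have herase : M.erase S = N.erase S := by
      apply IH (M.erase S) (Multiset.erase_lt.2 hS)
      · intro A hA B hB
        exact hcM A (Multiset.mem_of_mem_erase hA) B (Multiset.mem_of_mem_erase hB)
      · intro A hA B hB
        exact hcN A (Multiset.mem_of_mem_erase hA) B (Multiset.mem_of_mem_erase hB)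
      · have h1 := congrArg Multiset.card hMe
        have h2 := congrArg Multiset.card hNe
        simp only [Multiset.card_cons] at h1 h2
        omega
      · intro x
        have h1 : cnt x M = cnt x (M.erase S) + (if x ∈ S then 1 else 0) := by
          conv_lhs => rw [hMe]
          rw [cnt_cons]
        have h2 : cnt x N = cnt x (N.erase S) + (if x ∈ S then 1 else 0) := by
          conv_lhs => rw [hNe]
          rw [cnt_cons]
        have := hcnt x
        omega
    rw [hMe, hNe, herase]

/-- potential function measuring distance from chain normal form -/
def pot (M : Multiset (Finset β)) : ℕ :=
  (M.map fun S => Fintype.card β * Fintype.card β - S.card * S.card).sum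

lemma pot_cons (S : Finset β) (M : Multiset (Finset β)) :
    pot (S ::ₘ M) = (Fintype.card β * Fintype.card β - S.card * S.card) + pot M := by
  simp [pot]

/-- one binomial step on a non-chain multiset -/
lemma step (N : Multiset (Finset β)) (hN : ¬ IsChainM N) :
    ∃ N' : Multiset (Finset β), prodX N - prodX N' ∈ Jb β ∧
      Multiset.card N' = Multiset.card N ∧ (∀ x, cnt x N' = cnt x N) ∧ pot N' < pot N := by
  simp only [IsChainM, not_forall] at hN
  obtain ⟨S, hS, T, hT, hST⟩ := hN
  push_neg at hST
  obtain ⟨hST1, hST2⟩ := hST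
  have hne : T ≠ S := by rintro rfl; exact hST1 subset_rfl
  have hT' : T ∈ N.erase S := (Multiset.mem_erase_of_ne hne).2 hT
  set N₀ := (N.erase S).erase T with hN₀
  have hNrepr : N = S ::ₘ T ::ₘ N₀ := by
    rw [hN₀, Multiset.cons_erase hT', Multiset.cons_erase hS]
  refine ⟨(S ∪ T) ::ₘ (S ∩ T) ::ₘ N₀, ?_, ?_, ?_, ?_⟩
  · rw [hNrepr]
    rw [prodX_cons, prodX_cons, prodX_cons, prodX_cons]
    have : MvPolynomial.X S * (MvPolynomial.X T * prodX N₀) -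
        MvPolynomial.X (S ∪ T) * (MvPolynomial.X (S ∩ T) * prodX N₀)
        = (MvPolynomial.X S * MvPolynomial.X T -
            MvPolynomial.X (S ∪ T) * MvPolynomial.X (S ∩ T)) * prodX N₀ := by ring
    rw [this]
    exact Ideal.mul_mem_right _ _ (Ideal.subset_span ⟨S, T, rfl⟩)
  · rw [hNrepr]; simp
  · intro x
    rw [hNrepr, cnt_cons, cnt_cons, cnt_cons, cnt_cons]
    by_cases h1 : x ∈ S <;> by_cases h2 : x ∈ T <;>
      simp [Finset.mem_union, Finset.mem_inter, h1, h2]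
  · rw [hNrepr, pot_cons, pot_cons, pot_cons, pot_cons]
    have hcard : (S ∪ T).card + (S ∩ T).card = S.card + T.card :=
      Finset.card_union_add_card_inter S T
    have h1 : S.card < (S ∪ T).card := by
      apply Finset.card_lt_card
      refine ⟨Finset.subset_union_left, fun h => hST2 (fun x hx => h (Finset.mem_union_right _ hx))⟩
    have h2 : (S ∩ T).card < S.card := by
      apply Finset.card_lt_card
      refine ⟨Finset.inter_subset_left, fun h => hST1 (fun x hx => Finset.mem_of_mem_inter_right (h hx))⟩
    have hb1 : (S ∪ T).card ≤ Fintype.card β := Finset.card_le_univ _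
    have hb2 : S.card ≤ Fintype.card β := Finset.card_le_univ _
    have hb3 : T.card ≤ Fintype.card β := Finset.card_le_univ _
    have hb4 : (S ∩ T).card ≤ Fintype.card β := Finset.card_le_univ _
    set B := Fintype.card β * Fintype.card β with hB
    set s2 := S.card * S.card with hs2
    set t2 := T.card * T.card with ht2
    set u2 := (S ∪ T).card * (S ∪ T).card with hu2
    set i2 := (S ∩ T).card * (S ∩ T).card with hi2
    have key : s2 + t2 < u2 + i2 := by
      rw [hs2, ht2, hu2, hi2]; nlinarith [hcard, h1, h2]
    have hbb1 : u2 ≤ B := Nat.mul_le_mul hb1 hb1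
    have hbb2 : s2 ≤ B := Nat.mul_le_mul hb2 hb2
    have hbb3 : t2 ≤ B := Nat.mul_le_mul hb3 hb3
    have hbb4 : i2 ≤ B := Nat.mul_le_mul hb4 hb4
    omega

lemma prodX_sub_mem : ∀ (k : ℕ) (M N : Multiset (Finset β)), pot M + pot N ≤ k →
    Multiset.card M = Multiset.card N → (∀ x, cnt x M = cnt x N) →
    prodX M - prodX N ∈ Jb β := by
  intro k
  induction k with
  | zero =>
    intro M N hk hcard hcnt
    by_cases hcM : IsChainM M
    · by_cases hcN : IsChainM N
      · rw [chain_eq M N hcM hcN hcard hcnt]; simp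
      · obtain ⟨N', _, _, _, hpot⟩ := step N hcN; omega
    · obtain ⟨M', _, _, _, hpot⟩ := step M hcM; omega
  | succ k IH =>
    intro M N hk hcard hcnt
    by_cases hcM : IsChainM M
    · by_cases hcN : IsChainM N
      · rw [chain_eq M N hcM hcN hcard hcnt]; simp
      · obtain ⟨N', hmem, hcard', hcnt', hpot⟩ := step N hcN
        have : prodX M - prodX N = (prodX M - prodX N') - (prodX N - prodX N') := by ring
        rw [this]
        exact sub_mem (IH M N' (by omega) (by omega) (fun x => by rw [hcnt x, hcnt' x])) hmem
    · obtain ⟨M', hmem, hcard', hcnt', hpot⟩ := step M hcM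
      have : prodX M - prodX N = (prodX M' - prodX N) + (prodX M - prodX M') := by ring
      exact this ▸ add_mem (IH M' N (by omega) (by omega)
        (fun x => by rw [hcnt' x, hcnt x])) hmem

lemma prodX_sub_mem' (M N : Multiset (Finset β))
    (hcard : Multiset.card M = Multiset.card N) (hcnt : ∀ x, cnt x M = cnt x N) :
    prodX M - prodX N ∈ Jb β :=
  prodX_sub_mem (pot M + pot N) M N le_rfl hcard hcnt

end Binomial

section Rows

variable (m n : ℕ)

lemma rowOf_insert (p : Fin m × Fin n) (A : Finset (Fin m × Fin n)) (k : Fin m) :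
    rowOf m n (insert p A) k =
      if p.1 = k then insert p.2 (rowOf m n A k) else rowOf m n A k := by
  unfold rowOf
  rw [Finset.filter_insert]
  split
  · rw [Finset.image_insert]
  · rfl

lemma mem_rowOf (x : Fin n) (A : Finset (Fin m × Fin n)) (k : Fin m) :
    x ∈ rowOf m n A k ↔ (k, x) ∈ A := by
  unfold rowOf
  simp only [Finset.mem_image, Finset.mem_filter]
  constructor
  · rintro ⟨q, ⟨hq, rfl⟩, rfl⟩; exact hq
  · intro h; exact ⟨(k, x), ⟨h, rfl⟩, rfl⟩

variable (A : Finset (Fin m × Fin n))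

def tfun (x : Fin n) : ℕ := (univ.filter fun k : Fin m => x ∈ rowOf m n A k).card

def Vlev (s : ℕ) : Finset (Fin n) := univ.filter (fun x => s ≤ tfun m n A x)

def N0 : Multiset (Finset (Fin n)) := (Multiset.range (m-1)).map (fun s => Vlev m n A (s+1))

lemma tfun_le (x : Fin n) : tfun m n A x ≤ m := by
  unfold tfun
  calc (univ.filter fun k : Fin m => x ∈ rowOf m n A k).card ≤ (univ : Finset (Fin m)).card :=
        Finset.card_le_card (Finset.filter_subset _ _)
    _ = m := by simp

lemma tfun_le_pred {x : Fin n} {i : Fin m} (h : x ∉ rowOf m n A i) :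
    tfun m n A x ≤ m - 1 := by
  unfold tfun
  have hsub : (univ.filter fun k : Fin m => x ∈ rowOf m n A k) ⊆ univ.erase i := by
    intro k hk
    rw [Finset.mem_erase]
    refine ⟨?_, Finset.mem_univ _⟩
    rintro rfl
    exact h (Finset.mem_filter.1 hk).2
  calc _ ≤ (univ.erase i).card := Finset.card_le_card hsub
    _ = m - 1 := by rw [Finset.card_erase_of_mem (Finset.mem_univ _)]; simp

lemma countP_range_lt (c N : ℕ) :
    (Multiset.range N).countP (fun s => s < c) = min c N := by
  induction N with
  | zero => simp
  | succ N IH =>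
    rw [Multiset.range_succ, Multiset.countP_cons, IH]
    split <;> omega

lemma cnt_N0 (x : Fin n) : cnt x (N0 m n A) = min (tfun m n A x) (m-1) := by
  unfold cnt N0
  rw [Multiset.countP_map, ← Multiset.countP_eq_card_filter]
  rw [Multiset.countP_congr rfl (p' := fun s => s < tfun m n A x) ?_]
  · exact countP_range_lt _ _
  · intro s _
    simp only [Vlev, Finset.mem_filter, Finset.mem_univ, true_and, eq_iff_iff]
    omega

lemma prod_univ_eq_prodX (f : Fin m → Finset (Fin n)) :
    (∏ k : Fin m, MvPolynomial.X (f k) : MvPolynomial (Finset (Fin n)) ℂ)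
      = prodX (univ.val.map f) := by
  rw [prodX, Multiset.map_map]
  rfl

lemma cnt_map_univ (f : Fin m → Finset (Fin n)) (x : Fin n) :
    cnt x (Finset.univ.val.map f) = (univ.filter fun k => x ∈ f k).card := by
  unfold cnt
  rw [Multiset.countP_map, Finset.card_def, Finset.filter_val]

lemma termred (hm : 1 ≤ m) (p : Fin m × Fin n)
    (hp : p.2 ∉ rowOf m n A p.1) :
    (∏ k : Fin m, MvPolynomial.X (rowOf m n (insert p A) k) : MvPolynomial (Finset (Fin n)) ℂ)
      - MvPolynomial.X (insert p.2 (Vlev m n A m)) * prodX (N0 m n A) ∈ Jb (Fin n) := by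
  rw [prod_univ_eq_prodX, ← prodX_cons]
  apply prodX_sub_mem'
  · simp only [Multiset.card_map, Multiset.card_cons, N0, Multiset.card_range]
    rw [← Finset.card_def, Finset.card_univ, Fintype.card_fin]
    omega
  · intro x
    rw [cnt_map_univ, cnt_cons, cnt_N0]
    have hVm : x ∈ Vlev m n A m ↔ m ≤ tfun m n A x := by
      simp [Vlev]
    have htle : tfun m n A x ≤ m := tfun_le m n A x
    by_cases hx : x = p.2
    · have hfilter : (univ.filter fun k => x ∈ rowOf m n (insert p A) k)
          = insert p.1 (univ.filter fun k => x ∈ rowOf m n A k) := by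
        ext k
        simp only [Finset.mem_filter, Finset.mem_univ, true_and, Finset.mem_insert,
          rowOf_insert]
        by_cases hk : p.1 = k
        · subst hk
          simp [hx]
        · simp only [if_neg hk]
          constructor
          · intro h; exact Or.inr h
          · rintro (h | h)
            · exact absurd h.symm hk
            · exact h
      rw [hfilter, Finset.card_insert_of_notMem (by
        simp only [Finset.mem_filter, Finset.mem_univ, true_and]
        rw [hx]; exact hp)]
      have hpred : tfun m n A x ≤ m - 1 := tfun_le_pred m n A (by rw [hx]; exact hp)
      rw [if_pos (Finset.mem_insert.2 (Or.inl hx))]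
      have hT : (univ.filter fun k => x ∈ rowOf m n A k).card = tfun m n A x := rfl
      rw [hT]
      omega
    · have hfilter : (univ.filter fun k => x ∈ rowOf m n (insert p A) k)
          = univ.filter fun k => x ∈ rowOf m n A k := by
        apply Finset.filter_congr
        intro k _
        rw [rowOf_insert]
        split
        · simp [hx]
        · rfl
      rw [hfilter]
      have hmemiff : (x ∈ insert p.2 (Vlev m n A m)) ↔ m ≤ tfun m n A x := by
        rw [Finset.mem_insert, hVm]
        simp [hx]
      have hT : (univ.filter fun k => x ∈ rowOf m n A k).card = tfun m n A x := rfl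
      rw [hT]
      by_cases h2 : m ≤ tfun m n A x
      · rw [if_pos (hmemiff.2 h2)]
        omega
      · rw [if_neg (fun hc => h2 (hmemiff.1 hc))]
        omega

end Rows

section Matroid

variable {n m : ℕ} {L : Submodule ℂ (Fin n → ℂ)}

lemma mem_thickening {x : Fin m × Fin n → ℂ} :
    x ∈ thickening n m L ↔ ∃ v ∈ L, ∀ p : Fin m × Fin n, x p = v p.2 := by
  constructor
  · rintro ⟨v, hv, rfl⟩
    exact ⟨v, hv, fun p => rfl⟩
  · rintro ⟨v, hv, h⟩
    exact ⟨v, hv, by funext p; exact (h p).symm⟩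

lemma diag_mem {v : Fin n → ℂ} (hv : v ∈ L) :
    (fun p : Fin m × Fin n => v p.2) ∈ thickening n m L :=
  ⟨v, hv, rfl⟩

/-- Independence kills supported functionals. -/
lemma indep_kill {E : Type} {L' : Submodule ℂ (E → ℂ)} {I : Finset E}
    (hI : Indep E L' I) {δ : E → ℂ} (hδ : ∀ v ∈ L', ∑ i ∈ I, δ i * v i = 0) :
    ∀ i ∈ I, δ i = 0 := by
  intro i hi
  obtain ⟨x, hx, hxy⟩ := hI (fun j => if j = i then 1 else 0)
  have := hδ x hx
  rw [Finset.sum_congr rfl (fun j hj => by rw [hxy j hj])] at this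
  simpa [Finset.sum_ite_eq', hi] using this

/-- Proportionality of circuit functionals. -/
lemma prop_of_circuit {C₀ : Finset (Fin n)} (hC : IsCircuit (Fin n) L C₀)
    {α : Finset (Fin n) → Fin n → ℂ} (hα : CircuitData (Fin n) L α)
    {β : Fin n → ℂ} (hβ : ∀ v ∈ L, ∑ j ∈ C₀, β j * v j = 0) :
    ∃ c : ℂ, ∀ j ∈ C₀, β j = c * α C₀ j := by
  obtain ⟨⟨j₀, hj₀, hαj₀⟩, hvan⟩ := hα C₀ hC
  refine ⟨β j₀ / α C₀ j₀, ?_⟩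
  have hind : Indep (Fin n) L (C₀.erase j₀) := hC.2 _ (Finset.erase_ssubset hj₀)
  have hδ : ∀ v ∈ L, ∑ j ∈ C₀.erase j₀, (α C₀ j₀ * β j - β j₀ * α C₀ j) * v j = 0 := by
    intro v hv
    have h1 : ∑ j ∈ C₀, (α C₀ j₀ * β j - β j₀ * α C₀ j) * v j = 0 := by
      have e1 := hβ v hv
      have e2 := hvan v hv
      calc ∑ j ∈ C₀, (α C₀ j₀ * β j - β j₀ * α C₀ j) * v j
          = α C₀ j₀ * ∑ j ∈ C₀, β j * v j - β j₀ * ∑ j ∈ C₀, α C₀ j * v j := by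
            rw [Finset.mul_sum, Finset.mul_sum, ← Finset.sum_sub_distrib]
            exact Finset.sum_congr rfl (fun j _ => by ring)
        _ = 0 := by rw [e1, e2]; ring
    have h2 : ∑ j ∈ C₀, (α C₀ j₀ * β j - β j₀ * α C₀ j) * v j
        = (α C₀ j₀ * β j₀ - β j₀ * α C₀ j₀) * v j₀
          + ∑ j ∈ C₀.erase j₀, (α C₀ j₀ * β j - β j₀ * α C₀ j) * v j :=
      (Finset.add_sum_erase _ _ hj₀).symm
    rw [h1] at h2
    have h3 : (α C₀ j₀ * β j₀ - β j₀ * α C₀ j₀) = 0 := by ring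
    rw [h3, zero_mul, zero_add] at h2
    exact h2.symm
  have hkill := indep_kill hind hδ
  intro j hj
  by_cases hjj : j = j₀
  · subst hjj
    field_simp
  · have h4 := hkill j (Finset.mem_erase.2 ⟨hjj, hj⟩)
    have h3 : α C₀ j₀ * β j = β j₀ * α C₀ j := by linear_combination h4
    field_simp
    linear_combination h3

lemma circ_cases {C : Finset (Fin m × Fin n)}
    (hC : IsCircuit (Fin m × Fin n) (thickening n m L) C) :
    (∃ p q : Fin m × Fin n, p ∈ C ∧ q ∈ C ∧ p ≠ q ∧ p.2 = q.2 ∧ C = {p, q}) ∨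
    ((∀ p ∈ C, ∀ q ∈ C, p.2 = q.2 → p = q) ∧
      IsCircuit (Fin n) L (C.image Prod.snd)) := by
  by_cases hinj : ∀ p ∈ C, ∀ q ∈ C, p.2 = q.2 → p = q
  · right
    refine ⟨hinj, ?_, ?_⟩
    · intro hI
      apply hC.1
      intro y
      set y₀ : Fin n → ℂ := fun j => if h : ∃ p ∈ C, p.2 = j then y h.choose else 0 with hy₀
      have hy₀eq : ∀ p ∈ C, y₀ p.2 = y p := by
        intro p hp
        have h : ∃ q ∈ C, q.2 = p.2 := ⟨p, hp, rfl⟩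
        rw [hy₀]
        simp only
        rw [dif_pos h]
        congr 1
        exact hinj _ h.choose_spec.1 _ hp h.choose_spec.2
      obtain ⟨v, hv, hvy⟩ := hI y₀
      refine ⟨fun p => v p.2, diag_mem hv, ?_⟩
      intro p hp
      show v p.2 = y p
      rw [hvy p.2 (Finset.mem_image_of_mem _ hp), hy₀eq p hp]
    · intro C₀' hsub
      set C' := C.filter (fun p => p.2 ∈ C₀') with hC'
      have hC'sub : C' ⊂ C := by
        refine ⟨Finset.filter_subset _ _, ?_⟩
        obtain ⟨j, hjC₀, hjC₀'⟩ := Finset.exists_of_ssubset hsub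
        obtain ⟨p, hp, rfl⟩ := Finset.mem_image.1 hjC₀
        intro hle
        have := hle hp
        rw [hC', Finset.mem_filter] at this
        exact hjC₀' this.2
      have hInd := hC.2 C' hC'sub
      intro y₀
      obtain ⟨x, hx, hxy⟩ := hInd (fun p => y₀ p.2)
      obtain ⟨v, hv, hxv⟩ := mem_thickening.1 hx
      refine ⟨v, hv, ?_⟩
      intro j hj
      obtain ⟨p, hp, rfl⟩ := Finset.mem_image.1 (hsub.1 hj)
      have hpC' : p ∈ C' := by
        rw [hC', Finset.mem_filter]; exact ⟨hp, hj⟩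
      rw [← hxv p, hxy p hpC']
  · left
    push_neg at hinj
    obtain ⟨p, hp, q, hq, hpq2, hpq⟩ := hinj
    have hdep : ¬ Indep (Fin m × Fin n) (thickening n m L) {p, q} := by
      intro hI
      obtain ⟨x, hx, hxy⟩ := hI (fun r => if r = p then 1 else 0)
      obtain ⟨v, hv, hxv⟩ := mem_thickening.1 hx
      have h1 : x p = 1 := by
        rw [hxy p (Finset.mem_insert_self _ _)]; simp
      have h2 : x q = 0 := by
        rw [hxy q (Finset.mem_insert.2 (Or.inr (Finset.mem_singleton_self _)))]
        rw [if_neg (fun h : q = p => hpq h.symm)]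
      rw [hxv p, hpq2] at h1
      rw [hxv q] at h2
      rw [h1] at h2
      exact one_ne_zero h2
    have hsub : ({p, q} : Finset (Fin m × Fin n)) ⊆ C := by
      intro r hr
      rcases Finset.mem_insert.1 hr with rfl | hr
      · exact hp
      · rw [Finset.mem_singleton.1 hr]; exact hq
    have hCeq : C = {p, q} := by
      by_contra hne
      exact hdep (hC.2 _ ⟨hsub, fun hle => hne (Finset.Subset.antisymm hle hsub)⟩)
    exact ⟨p, q, hp, hq, hpq, hpq2, hCeq⟩

lemma pair_sum_zero {C : Finset (Fin m × Fin n)}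
    (hC : IsCircuit (Fin m × Fin n) (thickening n m L) C)
    {α' : Finset (Fin m × Fin n) → Fin m × Fin n → ℂ}
    (hα' : CircuitData (Fin m × Fin n) (thickening n m L) α')
    {p q : Fin m × Fin n} (hne : p ≠ q) (h2 : p.2 = q.2) (hCeq : C = {p, q}) :
    α' C p + α' C q = 0 := by
  have hvan := (hα' C hC).2
  have hpsub : ({p} : Finset (Fin m × Fin n)) ⊂ C := by
    rw [hCeq]
    refine ⟨by intro r hr; rw [Finset.mem_singleton.1 hr]; exact Finset.mem_insert_self _ _, ?_⟩
    intro hle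
    have := hle (Finset.mem_insert.2 (Or.inr (Finset.mem_singleton_self q)))
    exact hne ((Finset.mem_singleton.1 this).symm)
  obtain ⟨x, hx, hxy⟩ := hC.2 _ hpsub (fun _ => 1)
  obtain ⟨v, hv, hxv⟩ := mem_thickening.1 hx
  have hv1 : v p.2 = 1 := by rw [← hxv p, hxy p (Finset.mem_singleton_self p)]
  have hfin := hvan x hx
  rw [hCeq] at hfin ⊢
  rw [Finset.sum_pair hne, hxv p, hxv q, ← h2, hv1] at hfin
  simpa using hfin

end Matroid

section GenMem

variable {n m : ℕ} {L : Submodule ℂ (Fin n → ℂ)}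
  {α : Finset (Fin n) → Fin n → ℂ}
  {α' : Finset (Fin m × Fin n) → Fin m × Fin n → ℂ}

lemma Jb_le_SE : Jb (Fin n) ≤ SEIdeal (Fin n) L α :=
  Ideal.span_mono Set.subset_union_left

lemma gammaTilde_X (S : Finset (Fin m × Fin n)) :
    gammaTilde m n (MvPolynomial.X S) = ∏ k : Fin m, MvPolynomial.X (rowOf m n S k) := by
  simp [gammaTilde]

lemma gammaTilde_C (c : ℂ) :
    gammaTilde m n (MvPolynomial.C c) = MvPolynomial.C c := by
  simp [gammaTilde, MvPolynomial.algebraMap_eq]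

lemma gen_mem (hm : 1 ≤ m)
    (hα : CircuitData (Fin n) L α)
    (hα' : CircuitData (Fin m × Fin n) (thickening n m L) α')
    {Cs A : Finset (Fin m × Fin n)}
    (hC : IsCircuit (Fin m × Fin n) (thickening n m L) Cs) (hdisj : Disjoint A Cs) :
    gammaTilde m n (∑ p ∈ Cs, MvPolynomial.C (α' Cs p) * MvPolynomial.X (insert p A))
      ∈ SEIdeal (Fin n) L α := by
  have hrow : ∀ p ∈ Cs, p.2 ∉ rowOf m n A p.1 := by
    intro p hp h
    rw [mem_rowOf] at h
    exact Finset.disjoint_right.1 hdisj hp (by rwa [Prod.mk.eta] at h)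
  rw [map_sum]
  rw [Finset.sum_congr rfl (fun p (hp : p ∈ Cs) => by
    rw [map_mul, gammaTilde_C, gammaTilde_X])]
  set W := Vlev m n A m with hW
  set P0 := prodX (N0 m n A) with hP0
  have hsplit : ∑ p ∈ Cs, MvPolynomial.C (α' Cs p) *
        (∏ k : Fin m, MvPolynomial.X (rowOf m n (insert p A) k))
      = (∑ p ∈ Cs, MvPolynomial.C (α' Cs p) *
          ((∏ k : Fin m, MvPolynomial.X (rowOf m n (insert p A) k))
            - MvPolynomial.X (insert p.2 W) * P0))
        + P0 * (∑ p ∈ Cs, MvPolynomial.C (α' Cs p) * MvPolynomial.X (insert p.2 W)) := by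
    rw [Finset.mul_sum, ← Finset.sum_add_distrib]
    exact Finset.sum_congr rfl (fun p _ => by ring)
  rw [hsplit]
  apply add_mem
  · exact sum_mem (fun p hp => Ideal.mul_mem_left _ _
      (Jb_le_SE (termred m n A hm p (hrow p hp))))
  · apply Ideal.mul_mem_left
    rcases circ_cases hC with ⟨p, q, hp, hq, hne, h2, hCeq⟩ | ⟨hinj, hcirc⟩
    · have hz := pair_sum_zero hC hα' hne h2 hCeq
      rw [hCeq] at hz ⊢
      rw [Finset.sum_pair hne]
      have h2' : insert q.2 W = insert p.2 W := by rw [h2]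
      rw [h2']
      have : MvPolynomial.C (α' {p, q} p) * MvPolynomial.X (insert p.2 W)
          + MvPolynomial.C (α' {p, q} q) * MvPolynomial.X (insert p.2 W)
          = MvPolynomial.C (α' {p, q} p + α' {p, q} q) * MvPolynomial.X (insert p.2 W) := by
        rw [map_add]; ring
      rw [this, hz, map_zero, zero_mul]
      exact zero_mem _
    · set C₀ := Cs.image Prod.snd with hC₀
      set βf : Fin n → ℂ := fun j => if h : ∃ p ∈ Cs, p.2 = j then α' Cs h.choose else 0
        with hβf
      have hβfeq : ∀ p ∈ Cs, βf p.2 = α' Cs p := by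
        intro p hp
        have h : ∃ q ∈ Cs, q.2 = p.2 := ⟨p, hp, rfl⟩
        rw [hβf]
        simp only
        rw [dif_pos h]
        congr 1
        exact hinj _ h.choose_spec.1 _ hp h.choose_spec.2
      have hvan : ∀ v ∈ L, ∑ j ∈ C₀, βf j * v j = 0 := by
        intro v hv
        rw [hC₀, Finset.sum_image hinj]
        rw [Finset.sum_congr rfl (fun p (hp : p ∈ Cs) => by rw [hβfeq p hp])]
        exact (hα' Cs hC).2 _ (diag_mem hv)
      obtain ⟨c, hc⟩ := prop_of_circuit hcirc hα hvan
      have hdisjW : Disjoint W C₀ := by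
        rw [Finset.disjoint_right]
        intro j hj
        obtain ⟨p, hp, rfl⟩ := Finset.mem_image.1 hj
        intro hjW
        have h1 : m ≤ tfun m n A p.2 := by
          have := (Finset.mem_filter.1 hjW).2
          exact this
        have h2 := tfun_le_pred m n A (hrow p hp)
        omega
      have hgen : (∑ j ∈ C₀, MvPolynomial.C (α C₀ j) * MvPolynomial.X (insert j W))
          ∈ SEIdeal (Fin n) L α :=
        Ideal.subset_span (Or.inr ⟨C₀, W, hcirc, hdisjW, rfl⟩)
      have heq : ∑ p ∈ Cs, MvPolynomial.C (α' Cs p) * MvPolynomial.X (insert p.2 W)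
          = MvPolynomial.C c *
            ∑ j ∈ C₀, MvPolynomial.C (α C₀ j) * MvPolynomial.X (insert j W) := by
        calc ∑ p ∈ Cs, MvPolynomial.C (α' Cs p) * MvPolynomial.X (insert p.2 W)
            = ∑ p ∈ Cs, MvPolynomial.C (βf p.2) * MvPolynomial.X (insert p.2 W) :=
              Finset.sum_congr rfl (fun p hp => by rw [hβfeq p hp])
          _ = ∑ j ∈ C₀, MvPolynomial.C (βf j) * MvPolynomial.X (insert j W) := by
              rw [hC₀, Finset.sum_image hinj]
          _ = ∑ j ∈ C₀, MvPolynomial.C c *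
                (MvPolynomial.C (α C₀ j) * MvPolynomial.X (insert j W)) :=
              Finset.sum_congr rfl (fun j hj => by rw [hc j hj, map_mul, mul_assoc])
          _ = _ := (Finset.mul_sum _ _ _).symm
      rw [heq]
      exact Ideal.mul_mem_left _ _ hgen

end GenMem

section Surj

lemma exists_map_univ {β : Type} (m : ℕ) (M : Multiset β) (h : Multiset.card M = m) :
    ∃ f : Fin m → β, Finset.univ.val.map f = M := by
  have hlen : M.toList.length = m := by rw [Multiset.length_toList, h]
  refine ⟨fun i => M.toList.get (Fin.cast hlen.symm i), ?_⟩
  rw [Fin.univ_val_map]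
  have : List.ofFn (fun i : Fin m => M.toList.get (Fin.cast hlen.symm i)) = M.toList := by
    apply List.ext_get
    · simp [hlen]
    · intro i h1 h2
      simp [List.get_ofFn]
  rw [this, Multiset.coe_toList]

end Surj

end Stmt13Aux

/-- `γ̃` maps the degree-one component of `I_{L(m)}^SE` into `I_L^SE`, and
induces a well-defined surjection `γ : (R_{L(m)})_1 → (R_L)_m`: every degree-`m` element of
`R_L = ℂ[z_S : S ⊆ [n]]/I_L^SE` is the image under `γ̃` of a degree-one polynomial. -/
theorem stmt13 (n d : ℕ) (L : Submodule ℂ (Fin n → ℂ)) (hd : Module.finrank ℂ L = d)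
    (α : Finset (Fin n) → Fin n → ℂ) (hα : CircuitData (Fin n) L α)
    (m : ℕ) (hm : 1 ≤ m)
    (α' : Finset (Fin m × Fin n) → Fin m × Fin n → ℂ)
    (hα' : CircuitData (Fin m × Fin n) (thickening n m L) α') :
    (∀ p ∈ SEIdeal (Fin m × Fin n) (thickening n m L) α',
        p.IsHomogeneous 1 → gammaTilde m n p ∈ SEIdeal (Fin n) L α) ∧
    (∀ p : MvPolynomial (Finset (Fin n)) ℂ, p.IsHomogeneous m →
        ∃ r : MvPolynomial (Finset (Fin m × Fin n)) ℂ, r.IsHomogeneous 1 ∧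
          Ideal.Quotient.mk (SEIdeal (Fin n) L α) (gammaTilde m n r) =
            Ideal.Quotient.mk (SEIdeal (Fin n) L α) p) := by
  open Stmt13Aux MvPolynomial in
  constructor
  · -- Part 1
    intro p hp hhom
    have key : ∀ g ∈ ({q | ∃ S T : Finset (Fin m × Fin n),
          q = MvPolynomial.X S * MvPolynomial.X T -
            MvPolynomial.X (S ∪ T) * MvPolynomial.X (S ∩ T)} ∪
        {q | ∃ C A : Finset (Fin m × Fin n),
          IsCircuit (Fin m × Fin n) (thickening n m L) C ∧ Disjoint A C ∧
          q = ∑ i ∈ C, MvPolynomial.C (α' C i) * MvPolynomial.X (insert i A)} :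
          Set (MvPolynomial (Finset (Fin m × Fin n)) ℂ)),
        ∀ a : MvPolynomial (Finset (Fin m × Fin n)) ℂ,
          gammaTilde m n (homogeneousComponent 1 (a * g)) ∈ SEIdeal (Fin n) L α := by
      rintro g hg a
      have hdecomp : a * g = ∑ i ∈ Finset.range (a.totalDegree + 1),
          homogeneousComponent i a * g := by
        rw [← Finset.sum_mul, MvPolynomial.sum_homogeneousComponent]
      rcases hg with ⟨S, T, rfl⟩ | ⟨Cs, A, hC, hdisj, rfl⟩
      · have hg2 : (MvPolynomial.X S * MvPolynomial.X T -
            MvPolynomial.X (S ∪ T) * MvPolynomial.X (S ∩ T) :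
              MvPolynomial (Finset (Fin m × Fin n)) ℂ).IsHomogeneous 2 :=
          ((isHomogeneous_X _ _).mul (isHomogeneous_X _ _)).sub
            ((isHomogeneous_X _ _).mul (isHomogeneous_X _ _))
        have hzero : homogeneousComponent 1
            (a * (MvPolynomial.X S * MvPolynomial.X T -
              MvPolynomial.X (S ∪ T) * MvPolynomial.X (S ∩ T))) = 0 := by
          rw [hdecomp, map_sum]
          apply Finset.sum_eq_zero
          intro i _
          have h1 : homogeneousComponent i a *
              (MvPolynomial.X S * MvPolynomial.X T -
                MvPolynomial.X (S ∪ T) * MvPolynomial.X (S ∩ T))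
              ∈ homogeneousSubmodule (Finset (Fin m × Fin n)) ℂ (i + 2) :=
            (mem_homogeneousSubmodule _ _).2
              ((homogeneousComponent_isHomogeneous i a).mul hg2)
          rw [homogeneousComponent_of_mem h1, if_neg (by omega)]
        rw [hzero, map_zero]
        exact zero_mem _
      · have hg1 : (∑ i ∈ Cs, MvPolynomial.C (α' Cs i) * MvPolynomial.X (insert i A) :
            MvPolynomial (Finset (Fin m × Fin n)) ℂ).IsHomogeneous 1 := by
          rw [← mem_homogeneousSubmodule]
          exact sum_mem (fun i _ => (mem_homogeneousSubmodule _ _).2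
            ((isHomogeneous_C _ _).mul (isHomogeneous_X _ _)))
        have hsum : homogeneousComponent 1
            (a * ∑ i ∈ Cs, MvPolynomial.C (α' Cs i) * MvPolynomial.X (insert i A))
            = homogeneousComponent 0 a *
              ∑ i ∈ Cs, MvPolynomial.C (α' Cs i) * MvPolynomial.X (insert i A) := by
          conv_lhs => rw [hdecomp]
          rw [map_sum]
          rw [Finset.sum_congr rfl (fun i (_ : i ∈ Finset.range (a.totalDegree + 1)) => by
            have h1 : homogeneousComponent i a *
                (∑ j ∈ Cs, MvPolynomial.C (α' Cs j) * MvPolynomial.X (insert j A))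
                ∈ homogeneousSubmodule (Finset (Fin m × Fin n)) ℂ (i + 1) :=
              (mem_homogeneousSubmodule _ _).2
                ((homogeneousComponent_isHomogeneous i a).mul hg1)
            rw [homogeneousComponent_of_mem h1])]
          rw [Finset.sum_eq_single 0]
          · rw [if_pos rfl]
          · intro i _ hi
            rw [if_neg (by omega)]
          · intro h
            exact absurd (Finset.mem_range.2 (by omega)) h
        rw [hsum, homogeneousComponent_zero, map_mul, gammaTilde_C]
        exact Ideal.mul_mem_left _ _ (gen_mem hm hα hα' hC hdisj)
    have main : ∀ a, gammaTilde m n (homogeneousComponent 1 (a * p)) ∈ SEIdeal (Fin n) L α := by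
      refine Submodule.span_induction
        (p := fun x _ => ∀ a : MvPolynomial (Finset (Fin m × Fin n)) ℂ,
          gammaTilde m n (homogeneousComponent 1 (a * x)) ∈ SEIdeal (Fin n) L α)
        (fun x hx => key x hx) ?_ ?_ ?_ hp
      · intro a
        rw [mul_zero, map_zero, map_zero]
        exact zero_mem _
      · intro x y hxmem hymem hx hy a
        rw [mul_add, map_add, map_add]
        exact add_mem (hx a) (hy a)
      · intro r x hxmem hx a
        rw [smul_eq_mul, ← mul_assoc]
        exact hx (a * r)
    have hfin := main 1
    rw [one_mul, homogeneousComponent_of_mem ((mem_homogeneousSubmodule _ _).2 hhom),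
      if_pos rfl] at hfin
    exact hfin
  · -- Part 2
    intro p hp
    obtain ⟨g, hg⟩ : ∃ g : (Finset (Fin n) →₀ ℕ) → Fin m → Finset (Fin n),
        ∀ μ, Multiset.card (Finsupp.toMultiset μ) = m →
          Finset.univ.val.map (g μ) = Finsupp.toMultiset μ := by
      refine ⟨fun μ => if h : Multiset.card (Finsupp.toMultiset μ) = m
        then (exists_map_univ m _ h).choose else fun _ => ∅, ?_⟩
      intro μ h
      simp only
      rw [dif_pos h]
      exact (exists_map_univ m _ h).choose_spec
    set Sof : (Finset (Fin n) →₀ ℕ) → Finset (Fin m × Fin n) :=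
      fun μ => Finset.univ.filter (fun q : Fin m × Fin n => q.2 ∈ g μ q.1) with hSof
    refine ⟨∑ μ ∈ p.support, MvPolynomial.C (MvPolynomial.coeff μ p) *
        MvPolynomial.X (Sof μ), ?_, ?_⟩
    · rw [← mem_homogeneousSubmodule]
      exact sum_mem (fun μ _ => (mem_homogeneousSubmodule _ _).2
        ((isHomogeneous_C _ _).mul (isHomogeneous_X _ _)))
    · congr 1
      rw [map_sum]
      conv_rhs => rw [← MvPolynomial.support_sum_monomial_coeff p]
      apply Finset.sum_congr rfl
      intro μ hμ
      rw [map_mul, gammaTilde_C, gammaTilde_X]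
      have hcoeff : MvPolynomial.coeff μ p ≠ 0 := MvPolynomial.mem_support_iff.1 hμ
      have hcard : Multiset.card (Finsupp.toMultiset μ) = m := by
        rw [Finsupp.card_toMultiset]
        have h1 : μ.degree = m := by
          rw [Finsupp.degree_eq_weight_one]
          exact hp hcoeff
        rw [← h1]
        rfl
      have hrow : ∀ k, rowOf m n (Sof μ) k = g μ k := by
        intro k
        ext x
        rw [mem_rowOf, hSof]
        simp
      rw [Finset.prod_congr rfl (fun k _ => by rw [hrow k])]
      have hprod : (∏ k : Fin m, MvPolynomial.X (g μ k) :
          MvPolynomial (Finset (Fin n)) ℂ) = μ.prod fun s e => MvPolynomial.X s ^ e := by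
        rw [prod_univ_eq_prodX]
        simp only [prodX]
        rw [hg μ hcard, Finsupp.toMultiset_map, Finsupp.prod_toMultiset,
          Finsupp.prod_mapDomain_index (fun _ => pow_zero _) (fun _ _ _ => pow_add _ _ _)]
      rw [hprod, MvPolynomial.monomial_eq]
end
end

section
/- The degree-1 graded component of R_L = ℂ[z_S : S ⊆ [n]]/I_L^SE has ℂ-dimension equal to the number of independent sets of the matroid M of L, i.e., the number of subsets I ⊆ [n] such that the coordinate projection pr_I maps L onto ℂ^I. -/
open scoped Classical

noncomputable section

/-- The dimension of the degree-`k` graded component of `R_L = ℂ[z_S : S ⊆ E]/I_L^SE`,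
realized as the image in the quotient of the degree-`k` homogeneous polynomials. -/
def RLdim (E : Type) [Fintype E] [DecidableEq E] (L : Submodule ℂ (E → ℂ))
    (α : Finset E → E → ℂ) (k : ℕ) : ℕ :=
  Module.finrank ℂ (Submodule.map
    (Ideal.Quotient.mkₐ ℂ (SEIdeal E L α)).toLinearMap
    (MvPolynomial.homogeneousSubmodule (Finset E) ℂ k))

namespace S14

variable {E : Type} [Fintype E] [DecidableEq E]

/-- squarefree monomial evaluation -/
def pw (x : E → ℂ) (S : Finset E) : ℂ := ∏ i ∈ S, x i

/-- relation space for ground set `G` -/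
def RelS (G : Finset E) (L : Submodule ℂ (E → ℂ)) : Submodule ℂ (Finset E → ℂ) where
  carrier := {c | (∀ S, ¬ S ⊆ G → c S = 0) ∧ ∀ x ∈ L, ∑ S ∈ G.powerset, c S * pw x S = 0}
  add_mem' := by
    rintro a b ⟨ha1, ha2⟩ ⟨hb1, hb2⟩
    refine ⟨fun S hS => by simp [ha1 S hS, hb1 S hS], fun x hx => ?_⟩
    have := ha2 x hx; have := hb2 x hx
    simp only [Pi.add_apply, add_mul, Finset.sum_add_distrib, *]
    simp
  zero_mem' := ⟨fun S _ => rfl, fun x _ => by simp⟩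
  smul_mem' := by
    rintro r a ⟨ha1, ha2⟩
    refine ⟨fun S hS => by simp [ha1 S hS], fun x hx => ?_⟩
    have h := ha2 x hx
    simp only [Pi.smul_apply, smul_eq_mul, mul_assoc, ← Finset.mul_sum, h, mul_zero]

/-- the basic degree-one generator attached to `(A, u)` -/
def starL (G A : Finset E) : (E → ℂ) →ₗ[ℂ] (Finset E → ℂ) :=
  ∑ i ∈ G \ A, (LinearMap.proj i).smulRight (Pi.single (insert i A) 1)

lemma starL_apply (G A : Finset E) (u : E → ℂ) :
    starL G A u = ∑ i ∈ G \ A, u i • (Pi.single (insert i A) 1 : Finset E → ℂ) := by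
  simp [starL]

/-- admissibility of `(A,u)` as generator data. -/
def Ok (L : Submodule ℂ (E → ℂ)) (G A : Finset E) (u : E → ℂ) : Prop :=
  (∀ i, i ∉ G \ A → u i = 0) ∧ ∀ x ∈ L, ∑ i ∈ G \ A, u i * x i = 0

/-- span of all the degree-one relations -/
def WfS (G : Finset E) (L : Submodule ℂ (E → ℂ)) : Submodule ℂ (Finset E → ℂ) :=
  Submodule.span ℂ {w | ∃ A u, A ⊆ G ∧ Ok L G A u ∧ w = starL G A u}

/-- number of dependent subsets of `G` -/
def depC (G : Finset E) (L : Submodule ℂ (E → ℂ)) : ℕ :=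
  (G.powerset.filter (fun S => ¬ Indep E L S)).card

/-- contraction of `L` by `e` (as a subspace of the same ambient space) -/
def ctr (L : Submodule ℂ (E → ℂ)) (e : E) : Submodule ℂ (E → ℂ) :=
  L ⊓ LinearMap.ker (LinearMap.proj (R := ℂ) (φ := fun _ : E => ℂ) e)

lemma mem_ctr {L : Submodule ℂ (E → ℂ)} {e : E} {x : E → ℂ} :
    x ∈ ctr L e ↔ x ∈ L ∧ x e = 0 := by
  simp [ctr]

/-- truncation: kill coordinates on sets containing `e` -/
def trunc (e : E) : (Finset E → ℂ) →ₗ[ℂ] (Finset E → ℂ) where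
  toFun c := fun S => if e ∈ S then 0 else c S
  map_add' a b := by ext S; by_cases h : e ∈ S <;> simp [h]
  map_smul' r a := by ext S; by_cases h : e ∈ S <;> simp [h]

/-- shift up: `c ↦ (S ↦ c (S \ e))` supported on sets containing `e` -/
def shft (e : E) : (Finset E → ℂ) →ₗ[ℂ] (Finset E → ℂ) where
  toFun c := fun S => if e ∈ S then c (S.erase e) else 0
  map_add' a b := by ext S; by_cases h : e ∈ S <;> simp [h]
  map_smul' r a := by ext S; by_cases h : e ∈ S <;> simp [h]

/-- shift down: `c ↦ (T ↦ c (T ∪ e))` supported on sets not containing `e` -/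
def desh (e : E) : (Finset E → ℂ) →ₗ[ℂ] (Finset E → ℂ) where
  toFun c := fun T => if e ∈ T then 0 else c (insert e T)
  map_add' a b := by ext S; by_cases h : e ∈ S <;> simp [h]
  map_smul' r a := by ext S; by_cases h : e ∈ S <;> simp [h]

lemma trunc_apply (e : E) (c : Finset E → ℂ) (S : Finset E) :
    trunc e c S = if e ∈ S then 0 else c S := rfl

lemma shft_apply (e : E) (c : Finset E → ℂ) (S : Finset E) :
    shft e c S = if e ∈ S then c (S.erase e) else 0 := rfl

lemma desh_apply (e : E) (c : Finset E → ℂ) (S : Finset E) :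
    desh e c S = if e ∈ S then 0 else c (insert e S) := rfl

section rank
variable {M N : Type} [AddCommGroup M] [Module ℂ M] [AddCommGroup N] [Module ℂ N]

lemma finrank_eq_map_add_inf_ker (p : Submodule ℂ M) [Module.Finite ℂ p] (f : M →ₗ[ℂ] N) :
    Module.finrank ℂ p = Module.finrank ℂ (p.map f) + Module.finrank ℂ (p ⊓ LinearMap.ker f : Submodule ℂ M) := by
  have h := LinearMap.finrank_range_add_finrank_ker (f.comp p.subtype)
  rw [LinearMap.range_comp, Submodule.range_subtype] at h
  have hker : LinearMap.ker (f.comp p.subtype)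
      = Submodule.comap p.subtype (p ⊓ LinearMap.ker f) := by
    ext x
    simp [LinearMap.mem_ker, x.2]
  rw [hker] at h
  have e2 := (Submodule.comapSubtypeEquivOfLe
    (inf_le_left : p ⊓ LinearMap.ker f ≤ p)).finrank_eq
  omega

lemma finrank_map_eq_of_injOn (p : Submodule ℂ M) [Module.Finite ℂ p] (f : M →ₗ[ℂ] N) (g : N →ₗ[ℂ] M)
    (h : ∀ x ∈ p, g (f x) = x) : Module.finrank ℂ (p.map f) = Module.finrank ℂ p := by
  refine le_antisymm (Submodule.finrank_map_le f p) ?_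
  have hback : (p.map f).map g = p := by
    apply le_antisymm
    · rintro x hx
      obtain ⟨y, hy, rfl⟩ := Submodule.mem_map.mp hx
      obtain ⟨z, hz, rfl⟩ := Submodule.mem_map.mp hy
      rw [h z hz]; exact hz
    · intro x hx
      exact Submodule.mem_map.mpr ⟨f x, Submodule.mem_map.mpr ⟨x, hx, rfl⟩, h x hx⟩
  haveI : Module.Finite ℂ (p.map f) := by
    have : Module.Finite ℂ (LinearMap.range (f.comp p.subtype)) := inferInstance
    rwa [LinearMap.range_comp, Submodule.range_subtype] at this
  calc Module.finrank ℂ p = Module.finrank ℂ ((p.map f).map g) := by rw [hback]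
    _ ≤ Module.finrank ℂ (p.map f) := Submodule.finrank_map_le g (p.map f)

end rank

variable (L : Submodule ℂ (E → ℂ))

lemma indep_empty : Indep E L ∅ := fun _ => ⟨0, L.zero_mem, by simp⟩

lemma indep_insert_iff {e : E} (x' : E → ℂ) (hx' : x' ∈ L) (hxe : x' e = 1) {T : Finset E}
    (heT : e ∉ T) : Indep E L (insert e T) ↔ Indep E (ctr L e) T := by
  constructor
  · intro h y
    obtain ⟨x, hxL, hx⟩ := h (Function.update y e 0)
    refine ⟨x, mem_ctr.mpr ⟨hxL, ?_⟩, fun i hi => ?_⟩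
    · simpa using hx e (Finset.mem_insert_self e T)
    · have := hx i (Finset.mem_insert_of_mem hi)
      rwa [Function.update_of_ne (by rintro rfl; exact heT hi)] at this
  · intro h y
    obtain ⟨z, hz, hzi⟩ := h (fun i => y i - y e * x' i)
    rw [mem_ctr] at hz
    refine ⟨z + y e • x', L.add_mem hz.1 (L.smul_mem _ hx'), fun i hi => ?_⟩
    rcases Finset.mem_insert.mp hi with rfl | hi
    · simp [hz.2, hxe]
    · have := hzi i hi
      simp only [Pi.add_apply, Pi.smul_apply, smul_eq_mul, this]
      ring

lemma not_indep_of_loop {e : E} (hloop : ∀ x ∈ L, x e = 0) {S : Finset E} (heS : e ∈ S) :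
    ¬ Indep E L S := by
  intro h
  obtain ⟨x, hx, hxi⟩ := h (fun _ => 1)
  have h1 := hxi e heS
  rw [hloop x hx] at h1
  exact one_ne_zero h1.symm

lemma depC_insert (e : E) {s : Finset E} (he : e ∉ s) :
    depC (insert e s) L = depC s L +
      (s.powerset.filter (fun T => ¬ Indep E L (insert e T))).card := by
  rw [depC, Finset.powerset_insert, Finset.filter_union]
  rw [Finset.card_union_of_disjoint]
  · congr 1
    have hinj : Set.InjOn (insert e)
        ((s.powerset.filter (fun a => ¬ Indep E L (insert e a)) : Finset (Finset E)) :
          Set (Finset E)) := by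
      intro T hT U hU hTU
      simp only [Finset.coe_filter, Set.mem_setOf_eq, Finset.mem_powerset] at hT hU
      have heT : e ∉ T := fun hc => he (hT.1 hc)
      have heU : e ∉ U := fun hc => he (hU.1 hc)
      rw [← Finset.erase_insert heT, ← Finset.erase_insert heU, hTU]
    rw [Finset.filter_image, Finset.card_image_of_injOn hinj]
  · rw [Finset.disjoint_left]
    intro S hS hS'
    rw [Finset.mem_filter, Finset.mem_powerset] at hS
    rw [Finset.mem_filter, Finset.mem_image] at hS'
    obtain ⟨⟨T, hT, rfl⟩, -⟩ := hS'
    exact he (hS.1 (Finset.mem_insert_self e T))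

lemma depC_empty : depC (∅ : Finset E) L = 0 := by
  rw [depC, Finset.card_eq_zero, Finset.filter_eq_empty_iff]
  intro S hS
  simp only [Finset.powerset_empty, Finset.mem_singleton] at hS
  subst hS; simpa using indep_empty L

/-- the matroid counting identity, non-loop case -/
lemma depC_insert_nonloop {e : E} {s : Finset E} (he : e ∉ s)
    (x' : E → ℂ) (hx' : x' ∈ L) (hxe : x' e = 1) :
    depC (insert e s) L = depC s L + depC s (ctr L e) := by
  rw [depC_insert L e he]
  congr 1
  rw [depC]
  apply congrArg
  apply Finset.filter_congr
  intro T hT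
  rw [Finset.mem_powerset] at hT
  have heT : e ∉ T := fun hc => he (hT hc)
  rw [indep_insert_iff L x' hx' hxe heT]

/-- the matroid counting identity, loop case -/
lemma depC_insert_loop {e : E} {s : Finset E} (he : e ∉ s)
    (hloop : ∀ x ∈ L, x e = 0) :
    depC (insert e s) L = depC s L + 2 ^ s.card := by
  rw [depC_insert L e he]
  congr 1
  rw [Finset.filter_true_of_mem, Finset.card_powerset]
  intro T _
  exact not_indep_of_loop L hloop (Finset.mem_insert_self e T)

lemma mem_RelS {G : Finset E} {c : Finset E → ℂ} : c ∈ RelS G L ↔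
    (∀ S, ¬ S ⊆ G → c S = 0) ∧ ∀ x ∈ L, ∑ S ∈ G.powerset, c S * pw x S = 0 := Iff.rfl

lemma pw_insert (x : E → ℂ) {i : E} {A : Finset E} (h : i ∉ A) :
    pw x (insert i A) = x i * pw x A := Finset.prod_insert h

lemma starL_coord (G A : Finset E) (u : E → ℂ) (S : Finset E) :
    starL G A u S = ∑ i ∈ G \ A, u i * (if S = insert i A then 1 else 0) := by
  have h := congrFun (starL_apply G A u) S
  rw [h, Finset.sum_apply]
  apply Finset.sum_congr rfl
  intro i _
  simp [Pi.single_apply]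

/-- functions supported on a given finite family of sets -/
def suppIn (t : Finset (Finset E)) : Submodule ℂ (Finset E → ℂ) where
  carrier := {c | ∀ S, S ∉ t → c S = 0}
  add_mem' := by rintro a b ha hb; intro S hS; simp [ha S hS, hb S hS]
  zero_mem' := fun S _ => rfl
  smul_mem' := by rintro r a ha; intro S hS; simp [ha S hS]

lemma finrank_suppIn (t : Finset (Finset E)) :
    Module.finrank ℂ (suppIn t : Submodule ℂ (Finset E → ℂ)) = t.card := by
  have eqv : (suppIn t : Submodule ℂ (Finset E → ℂ)) ≃ₗ[ℂ] ({S // S ∈ t} → ℂ) := by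
    refine
      { toFun := fun c S => c.1 S.1
        invFun := fun y => ⟨fun S => if h : S ∈ t then y ⟨S, h⟩ else 0, ?_⟩
        map_add' := fun a b => rfl
        map_smul' := fun r a => rfl
        left_inv := ?_
        right_inv := ?_ }
    · intro S hS; simp [hS]
    · rintro ⟨c, hc⟩
      ext S
      by_cases h : S ∈ t
      · simp [h]
      · simp [h, hc S h]
    · intro y
      ext S
      simp [S.2]
  rw [eqv.finrank_eq, Module.finrank_pi]
  simp [Fintype.card_coe]

lemma trunc_mem_RelS {e : E} {s : Finset E} (he : e ∉ s) {L L' : Submodule ℂ (E → ℂ)}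
    (hL' : ∀ x ∈ L', x ∈ L ∧ x e = 0) {c : Finset E → ℂ} (hc : c ∈ RelS (insert e s) L) :
    trunc e c ∈ RelS s L' := by
  obtain ⟨hsupp, hrel⟩ := hc
  constructor
  · intro S hS
    show (if e ∈ S then 0 else c S) = 0
    by_cases h : e ∈ S
    · simp [h]
    · simp only [h, if_false]
      apply hsupp
      intro hSG
      exact hS (fun i hi => (Finset.mem_insert.mp (hSG hi)).resolve_left
        (by rintro rfl; exact h hi))
  · intro x hx
    obtain ⟨hxL, hxe⟩ := hL' x hx
    have h0 := hrel x hxL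
    rw [Finset.sum_powerset_insert he] at h0
    have h2 : ∀ T ∈ s.powerset, c (insert e T) * pw x (insert e T) = 0 := by
      intro T hT
      rw [Finset.mem_powerset] at hT
      have heT : e ∉ T := fun h => he (hT h)
      rw [pw_insert x heT, hxe]
      ring
    rw [Finset.sum_congr rfl h2, Finset.sum_const, smul_zero, add_zero] at h0
    rw [← h0]
    apply Finset.sum_congr rfl
    intro T hT
    rw [Finset.mem_powerset] at hT
    have heT : e ∉ T := fun h => he (hT h)
    show (if e ∈ T then 0 else c T) * pw x T = c T * pw x T
    simp [heT]

lemma desh_mem_RelS {e : E} {s : Finset E} (he : e ∉ s) {L : Submodule ℂ (E → ℂ)}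
    (x' : E → ℂ) (hx' : x' ∈ L) (hxe : x' e = 1) {c : Finset E → ℂ}
    (hc : c ∈ RelS (insert e s) L) (hker : ∀ S, e ∉ S → c S = 0) :
    desh e c ∈ RelS s L := by
  obtain ⟨hsupp, hrel⟩ := hc
  have hP : ∀ y ∈ L, y e * (∑ T ∈ s.powerset, c (insert e T) * pw y T) = 0 := by
    intro y hy
    have h0 := hrel y hy
    rw [Finset.sum_powerset_insert he] at h0
    have h1 : ∀ T ∈ s.powerset, c T * pw y T = 0 := by
      intro T hT
      rw [Finset.mem_powerset] at hT
      rw [hker T (fun h => he (hT h)), zero_mul]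
    rw [Finset.sum_congr rfl h1, Finset.sum_const, smul_zero, zero_add] at h0
    rw [Finset.mul_sum, ← h0]
    apply Finset.sum_congr rfl
    intro T hT
    rw [Finset.mem_powerset] at hT
    rw [pw_insert y (fun h => he (hT h))]
    ring
  constructor
  · intro T hT
    show (if e ∈ T then 0 else c (insert e T)) = 0
    by_cases h : e ∈ T
    · simp [h]
    · simp only [h, if_false]
      apply hsupp
      intro hTG
      have : T ⊆ insert e s := (Finset.insert_subset_iff.mp hTG).2
      exact hT (fun i hi => (Finset.mem_insert.mp (this hi)).resolve_left
        (by rintro rfl; exact h hi))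
  · intro x hx
    have hgoal : ∑ T ∈ s.powerset, desh e c T * pw x T
        = ∑ T ∈ s.powerset, c (insert e T) * pw x T := by
      apply Finset.sum_congr rfl
      intro T hT
      rw [Finset.mem_powerset] at hT
      have heT : e ∉ T := fun h => he (hT h)
      show (if e ∈ T then 0 else c (insert e T)) * pw x T = _
      simp [heT]
    rw [hgoal]
    -- polynomial argument
    set p : Polynomial ℂ := ∑ T ∈ s.powerset, Polynomial.C (c (insert e T)) *
      ∏ i ∈ T, (Polynomial.C (x i) + Polynomial.C (x' i) * Polynomial.X) with hp
    have heval : ∀ t : ℂ, p.eval t = ∑ T ∈ s.powerset, c (insert e T) * pw (x + t • x') T := by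
      intro t
      rw [hp, Polynomial.eval_finset_sum]
      apply Finset.sum_congr rfl
      intro T _
      rw [Polynomial.eval_mul, Polynomial.eval_C, Polynomial.eval_prod]
      congr 1
      rw [pw]
      apply Finset.prod_congr rfl
      intro i _
      simp only [Polynomial.eval_add, Polynomial.eval_mul, Polynomial.eval_C,
        Polynomial.eval_X, Pi.add_apply, Pi.smul_apply, smul_eq_mul]
      ring
  -- some arrangement
    have hfun : (Polynomial.X + Polynomial.C (x e)) * p = 0 := by
      apply Polynomial.funext
      intro t
      rw [Polynomial.eval_mul, Polynomial.eval_add, Polynomial.eval_X, Polynomial.eval_C,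
        Polynomial.eval_zero, heval t]
      have hy : x + t • x' ∈ L := L.add_mem hx (L.smul_mem t hx')
      have := hP (x + t • x') hy
      have hye : (x + t • x') e = t + x e := by simp [hxe]; ring
      rw [hye] at this
      exact this
    have hpz : p = 0 := by
      rcases mul_eq_zero.mp hfun with h | h
      · exact absurd h (Polynomial.X_add_C_ne_zero (x e))
      · exact h
    have h00 := heval 0
    rw [hpz, Polynomial.eval_zero] at h00
    have hx0 : x + (0:ℂ) • x' = x := by simp
    rw [hx0] at h00
    exact h00.symm

lemma shft_desh_id {e : E} {c : Finset E → ℂ} (hker : ∀ S, e ∉ S → c S = 0) :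
    shft e (desh e c) = c := by
  ext S
  show (if e ∈ S then (if e ∈ S.erase e then 0 else c (insert e (S.erase e))) else 0) = c S
  by_cases h : e ∈ S
  · simp [h, Finset.insert_erase h]
  · simp [h, hker S h]

lemma trunc_ker_supp {e : E} {c : Finset E → ℂ} (h : trunc e c = 0) :
    ∀ S, e ∉ S → c S = 0 := by
  intro S hS
  have := congrFun h S
  simpa [trunc, hS] using this

/-- upper bound: dim Rel ≤ #dep -/
lemma finrank_RelS_le : ∀ (G : Finset E) (L : Submodule ℂ (E → ℂ)),
    Module.finrank ℂ (RelS G L) ≤ depC G L := by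
  intro G
  induction G using Finset.induction_on with
  | empty =>
    intro L
    have hbot : RelS (∅ : Finset E) L = ⊥ := by
      rw [eq_bot_iff]
      rintro c ⟨hsupp, hrel⟩
      have h0 := hrel 0 L.zero_mem
      rw [Finset.powerset_empty, Finset.sum_singleton] at h0
      have hc0 : c ∅ = 0 := by simpa [pw] using h0
      rw [Submodule.mem_bot]
      ext S
      by_cases h : S = ∅
      · rw [h, hc0]; rfl
      · exact hsupp S (fun hsub => h (Finset.subset_empty.mp hsub))
    rw [hbot, depC_empty]
    simp
  | @insert e s he ih =>
    intro L
    have hsplit := finrank_eq_map_add_inf_ker (RelS (insert e s) L) (trunc e)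
    by_cases hloop : ∀ x ∈ L, x e = 0
    · -- loop case
      have h1 : (RelS (insert e s) L).map (trunc e) ≤ RelS s L := by
        rintro w ⟨c, hc, rfl⟩
        exact trunc_mem_RelS he (fun x hx => ⟨hx, hloop x hx⟩) hc
      have h2 : (RelS (insert e s) L) ⊓ LinearMap.ker (trunc e) ≤
          suppIn ((insert e s).powerset.filter (fun S => e ∈ S)) := by
        rintro c ⟨hc, hker⟩
        replace hker : trunc e c = 0 := hker
        intro S hS
        rw [Finset.mem_filter, Finset.mem_powerset] at hS
        by_cases hsub : S ⊆ insert e s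
        · exact trunc_ker_supp hker S (fun hin => hS ⟨hsub, hin⟩)
        · exact hc.1 S hsub
      have hcard : ((insert e s).powerset.filter (fun S => e ∈ S)).card = 2 ^ s.card := by
        have himg : (insert e s).powerset.filter (fun S => e ∈ S)
            = s.powerset.image (insert e) := by
          ext S
          simp only [Finset.mem_filter, Finset.mem_powerset, Finset.mem_image]
          constructor
          · rintro ⟨hsub, hin⟩
            refine ⟨S.erase e, ?_, Finset.insert_erase hin⟩
            intro i hi
            rw [Finset.mem_erase] at hi
            exact (Finset.mem_insert.mp (hsub hi.2)).resolve_left hi.1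
          · rintro ⟨T, hT, rfl⟩
            exact ⟨Finset.insert_subset_insert e hT, Finset.mem_insert_self e T⟩
        rw [himg, Finset.card_image_of_injOn, Finset.card_powerset]
        intro T hT U hU hTU
        simp only [Finset.coe_powerset, Set.mem_preimage, Set.mem_powerset_iff,
          Finset.coe_subset, Finset.mem_coe, Finset.mem_powerset] at hT hU
        have heT : e ∉ T := fun hc' => he (hT hc')
        have heU : e ∉ U := fun hc' => he (hU hc')
        rw [← Finset.erase_insert heT, ← Finset.erase_insert heU, hTU]
      calc Module.finrank ℂ (RelS (insert e s) L)
          = Module.finrank ℂ ((RelS (insert e s) L).map (trunc e))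
            + Module.finrank ℂ ((RelS (insert e s) L) ⊓ LinearMap.ker (trunc e) :
              Submodule ℂ (Finset E → ℂ)) := hsplit
        _ ≤ depC s L + 2 ^ s.card := by
            gcongr
            · exact le_trans (Submodule.finrank_mono h1) (ih L)
            · rw [← hcard, ← finrank_suppIn]
              exact Submodule.finrank_mono h2
        _ = depC (insert e s) L := (depC_insert_loop L he hloop).symm
    · -- non-loop case
      push_neg at hloop
      obtain ⟨x₀, hx₀L, hx₀e⟩ := hloop
      set x' : E → ℂ := (x₀ e)⁻¹ • x₀ with hx'def
      have hx' : x' ∈ L := L.smul_mem _ hx₀L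
      have hxe : x' e = 1 := by
        rw [hx'def]
        simp [inv_mul_cancel₀ hx₀e]
      have h1 : (RelS (insert e s) L).map (trunc e) ≤ RelS s (ctr L e) := by
        rintro w ⟨c, hc, rfl⟩
        exact trunc_mem_RelS he (fun x hx => mem_ctr.mp hx) hc
      have h2 : ((RelS (insert e s) L) ⊓ LinearMap.ker (trunc e) :
          Submodule ℂ (Finset E → ℂ)).map (desh e) ≤ RelS s L := by
        rintro w ⟨c, ⟨hc, hker⟩, rfl⟩
        replace hker : trunc e c = 0 := hker
        exact desh_mem_RelS he x' hx' hxe hc (trunc_ker_supp hker)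
      have h3 : Module.finrank ℂ ((RelS (insert e s) L) ⊓ LinearMap.ker (trunc e) :
          Submodule ℂ (Finset E → ℂ)) ≤ depC s L := by
        rw [← finrank_map_eq_of_injOn _ (desh e) (shft e) ?hid]
        · exact le_trans (Submodule.finrank_mono h2) (ih L)
        case hid =>
          rintro c ⟨hc, hker⟩
          replace hker : trunc e c = 0 := hker
          exact shft_desh_id (trunc_ker_supp hker)
      calc Module.finrank ℂ (RelS (insert e s) L)
          = Module.finrank ℂ ((RelS (insert e s) L).map (trunc e))
            + Module.finrank ℂ ((RelS (insert e s) L) ⊓ LinearMap.ker (trunc e) :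
              Submodule ℂ (Finset E → ℂ)) := hsplit
        _ ≤ depC s (ctr L e) + depC s L := by
            gcongr
            exact le_trans (Submodule.finrank_mono h1) (ih (ctr L e))
        _ = depC (insert e s) L := by
            rw [depC_insert_nonloop L he x' hx' hxe]
            omega

lemma WfS_le_RelS (G : Finset E) : WfS G L ≤ RelS G L := by
  rw [WfS, Submodule.span_le]
  rintro w ⟨A, u, hA, ⟨hsupp, hann⟩, rfl⟩
  rw [SetLike.mem_coe, mem_RelS]
  constructor
  · intro S hS
    rw [starL_coord]
    apply Finset.sum_eq_zero
    intro i hi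
    rw [Finset.mem_sdiff] at hi
    have : ¬ S = insert i A := by
      rintro rfl
      exact hS (Finset.insert_subset hi.1 hA)
    simp [this]
  · intro x hx
    have step1 : ∑ S ∈ G.powerset, starL G A u S * pw x S
        = ∑ i ∈ G \ A, u i * pw x (insert i A) := by
      have : ∀ S ∈ G.powerset, starL G A u S * pw x S
          = ∑ i ∈ G \ A, (if S = insert i A then u i * pw x S else 0) := by
        intro S _
        rw [starL_coord, Finset.sum_mul]
        apply Finset.sum_congr rfl
        intro i _
        by_cases h : S = insert i A <;> simp [h]
      rw [Finset.sum_congr rfl this, Finset.sum_comm]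
      apply Finset.sum_congr rfl
      intro i hi
      rw [Finset.mem_sdiff] at hi
      have hmem : insert i A ∈ G.powerset :=
        Finset.mem_powerset.mpr (Finset.insert_subset hi.1 hA)
      rw [Finset.sum_ite_eq' G.powerset (insert i A) (fun S => u i * pw x S), if_pos hmem]
    rw [step1]
    have step2 : ∀ i ∈ G \ A, u i * pw x (insert i A) = (u i * x i) * pw x A := by
      intro i hi
      rw [Finset.mem_sdiff] at hi
      rw [pw_insert x hi.2]
      ring
    rw [Finset.sum_congr rfl step2, ← Finset.sum_mul, hann x hx, zero_mul]

lemma starL_mem_WfS {G A : Finset E} {u : E → ℂ} (hA : A ⊆ G) (hu : Ok L G A u) :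
    starL G A u ∈ WfS G L :=
  Submodule.subset_span ⟨A, u, hA, hu, rfl⟩

lemma sdiff_insert_of_not_mem_A {e : E} {s A : Finset E} (he : e ∉ A) :
    (insert e s) \ A = insert e (s \ A) := by
  ext i
  simp only [Finset.mem_sdiff, Finset.mem_insert]
  constructor
  · rintro ⟨h1 | h1, h2⟩
    · exact Or.inl h1
    · exact Or.inr ⟨h1, h2⟩
  · rintro (rfl | ⟨h1, h2⟩)
    · exact ⟨Or.inl rfl, he⟩
    · exact ⟨Or.inr h1, h2⟩

lemma sdiff_insert_insert {e : E} {s A : Finset E} (he : e ∉ s) :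
    (insert e s) \ (insert e A) = s \ A := by
  ext i
  simp only [Finset.mem_sdiff, Finset.mem_insert]
  constructor
  · rintro ⟨h1 | h1, h2⟩
    · exact absurd (Or.inl h1) h2
    · push_neg at h2
      exact ⟨h1, h2.2⟩
  · rintro ⟨h1, h2⟩
    have hne : i ≠ e := by rintro rfl; exact he h1
    exact ⟨Or.inr h1, by simp [hne, h2]⟩

lemma trunc_single_of_mem {e : E} {T : Finset E} (h : e ∈ T) :
    trunc e (Pi.single T (1:ℂ)) = 0 := by
  ext S
  rw [trunc_apply, Pi.zero_apply]
  by_cases hS : e ∈ S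
  · simp [hS]
  · have hne : S ≠ T := by rintro rfl; exact hS h
    simp [hS, Pi.single_apply, hne]

lemma trunc_single_of_not_mem {e : E} {T : Finset E} (h : e ∉ T) :
    trunc e (Pi.single T (1:ℂ)) = Pi.single T (1:ℂ) := by
  ext S
  rw [trunc_apply]
  by_cases hS : e ∈ S
  · have hne : S ≠ T := by rintro rfl; exact h hS
    simp [hS, Pi.single_apply, hne]
  · simp [hS]

lemma shft_single {e : E} {T : Finset E} (h : e ∉ T) :
    shft e (Pi.single T (1:ℂ)) = Pi.single (insert e T) (1:ℂ) := by
  ext S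
  rw [shft_apply]
  by_cases hS : e ∈ S
  · rw [if_pos hS]
    by_cases hST : S = insert e T
    · have h1 : S.erase e = T := by rw [hST, Finset.erase_insert h]
      rw [h1, hST]
      simp
    · have : S.erase e ≠ T := by
        intro hc
        exact hST (by rw [← hc, Finset.insert_erase hS])
      simp [Pi.single_apply, this, hST]
  · have : S ≠ insert e T := by
      rintro rfl
      exact hS (Finset.mem_insert_self e T)
    simp [hS, Pi.single_apply, this]

lemma WfS_supp {G : Finset E} {c : Finset E → ℂ} (hc : c ∈ WfS G L) :
    ∀ S, ¬ S ⊆ G → c S = 0 := ((WfS_le_RelS L G) hc).1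

lemma card_filter_mem_epow {e : E} {s : Finset E} (he : e ∉ s) :
    ((insert e s).powerset.filter (fun S => e ∈ S)).card = 2 ^ s.card := by
  have himg : (insert e s).powerset.filter (fun S => e ∈ S)
      = s.powerset.image (insert e) := by
    ext S
    simp only [Finset.mem_filter, Finset.mem_powerset, Finset.mem_image]
    constructor
    · rintro ⟨hsub, hin⟩
      refine ⟨S.erase e, ?_, Finset.insert_erase hin⟩
      intro i hi
      rw [Finset.mem_erase] at hi
      exact (Finset.mem_insert.mp (hsub hi.2)).resolve_left hi.1
    · rintro ⟨T, hT, rfl⟩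
      exact ⟨Finset.insert_subset_insert e hT, Finset.mem_insert_self e T⟩
  rw [himg, Finset.card_image_of_injOn, Finset.card_powerset]
  intro T hT U hU hTU
  simp only [Finset.coe_powerset, Set.mem_preimage, Set.mem_powerset_iff,
    Finset.coe_subset, Finset.mem_coe, Finset.mem_powerset] at hT hU
  have heT : e ∉ T := fun hc' => he (hT hc')
  have heU : e ∉ U := fun hc' => he (hU hc')
  rw [← Finset.erase_insert heT, ← Finset.erase_insert heU, hTU]

lemma finrank_span_singles (t : Finset (Finset E)) :
    Module.finrank ℂ (Submodule.span ℂ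
      (Set.range (fun S : {S // S ∈ t} => (Pi.single S.1 1 : Finset E → ℂ)))) = t.card := by
  have hli : LinearIndependent ℂ (fun S : {S // S ∈ t} => (Pi.single S.1 1 : Finset E → ℂ)) := by
    have h2 := (Pi.basisFun ℂ (Finset E)).linearIndependent.comp
      (fun S : {S // S ∈ t} => S.1) Subtype.val_injective
    convert h2 using 1
    funext S
    rw [Function.comp_apply, Pi.basisFun_apply]
  rw [finrank_span_eq_card hli, Fintype.card_coe]

/-- lower bound: #dep ≤ dim Wf -/
lemma depC_le_finrank_WfS : ∀ (G : Finset E) (L : Submodule ℂ (E → ℂ)),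
    depC G L ≤ Module.finrank ℂ (WfS G L) := by
  intro G
  induction G using Finset.induction_on with
  | empty =>
    intro L
    rw [depC_empty]
    exact Nat.zero_le _
  | @insert e s he ih =>
    intro L
    have hsplit := finrank_eq_map_add_inf_ker (WfS (insert e s) L) (trunc e)
    -- shifted copy of WfS s L sits inside the kernel part
    have hshift : (WfS s L).map (shft e) ≤
        (WfS (insert e s) L) ⊓ LinearMap.ker (trunc e) := by
      rw [WfS, Submodule.map_span, Submodule.span_le]
      rintro w ⟨w', ⟨A, u, hA, ⟨hsupp, hann⟩, rfl⟩, rfl⟩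
      have heA : e ∉ A := fun hc => he (hA hc)
      have hsd : (insert e s) \ (insert e A) = s \ A := sdiff_insert_insert he
      have hstar : shft e (starL s A u) = starL (insert e s) (insert e A) u := by
        rw [starL_apply, starL_apply, map_sum, hsd]
        apply Finset.sum_congr rfl
        intro i hi
        rw [Finset.mem_sdiff] at hi
        have hie : e ∉ insert i A := by
          rw [Finset.mem_insert]
          rintro (rfl | hc)
          · exact he hi.1
          · exact heA hc
        rw [map_smul, shft_single hie]
        have hcomm : insert e (insert i A) = insert i (insert e A) := by
          ext j
          simp only [Finset.mem_insert]
          tauto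
        rw [hcomm]
      rw [SetLike.mem_coe, Submodule.mem_inf, hstar]
      constructor
      · apply starL_mem_WfS
        · exact Finset.insert_subset_insert e hA
        · constructor
          · intro i hi
            rw [hsd] at hi
            exact hsupp i hi
          · intro x hx
            rw [hsd]
            exact hann x hx
      · rw [LinearMap.mem_ker]
        rw [starL_apply, map_sum]
        apply Finset.sum_eq_zero
        intro i hi
        rw [map_smul, trunc_single_of_mem, smul_zero]
        rw [Finset.mem_insert]
        right
        exact Finset.mem_insert_self e A
    have hshiftrank : Module.finrank ℂ ((WfS s L).map (shft e)) =
        Module.finrank ℂ (WfS s L) := by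
      apply finrank_map_eq_of_injOn _ (shft e) (desh e)
      intro c hc
      have hsupp := WfS_supp L hc
      ext T
      show (if e ∈ T then 0 else (shft e c) (insert e T)) = c T
      by_cases hT : e ∈ T
      · rw [if_pos hT]
        exact (hsupp T (fun hsub => he (hsub hT))).symm
      · rw [if_neg hT]
        show (if e ∈ insert e T then c ((insert e T).erase e) else 0) = c T
        rw [if_pos (Finset.mem_insert_self e T), Finset.erase_insert hT]
    by_cases hloop : ∀ x ∈ L, x e = 0
    · -- loop case
      have hlift : WfS s L ≤ (WfS (insert e s) L).map (trunc e) := by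
        rw [WfS, Submodule.span_le]
        rintro w ⟨A, u, hA, ⟨hsupp, hann⟩, rfl⟩
        have heA : e ∉ A := fun hc => he (hA hc)
        have hsd : (insert e s) \ A = insert e (s \ A) := sdiff_insert_of_not_mem_A heA
        have hes : e ∉ s \ A := fun hc => he (Finset.mem_sdiff.mp hc).1
        have hue : u e = 0 := hsupp e hes
        refine Submodule.mem_map.mpr ⟨starL (insert e s) A u, ?_, ?_⟩
        · apply starL_mem_WfS
          · exact hA.trans (Finset.subset_insert e s)
          · constructor
            · intro i hi
              rw [hsd, Finset.mem_insert] at hi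
              push_neg at hi
              by_cases hie : i = e
              · rw [hie]; exact hue
              · exact hsupp i (fun hc => hi.2 hc)
            · intro x hx
              rw [hsd, Finset.sum_insert hes, hue, zero_mul, zero_add]
              exact hann x hx
        · rw [starL_apply, starL_apply, map_sum, hsd, Finset.sum_insert hes]
          rw [map_smul, hue, zero_smul, zero_add]
          apply Finset.sum_congr rfl
          intro i hi
          rw [Finset.mem_sdiff] at hi
          have hie : e ∉ insert i A := by
            rw [Finset.mem_insert]
            rintro (rfl | hc)
            · exact he hi.1
            · exact heA hc
          rw [map_smul, trunc_single_of_not_mem hie]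
      -- all e-sets are in WfS in the loop case
      have hsingles : Submodule.span ℂ (Set.range
          (fun S : {S // S ∈ (insert e s).powerset.filter (fun S => e ∈ S)} =>
            (Pi.single S.1 1 : Finset E → ℂ))) ≤
          (WfS (insert e s) L) ⊓ LinearMap.ker (trunc e) := by
        rw [Submodule.span_le]
        rintro w ⟨⟨S, hS⟩, rfl⟩
        rw [Finset.mem_filter, Finset.mem_powerset] at hS
        obtain ⟨hsub, hin⟩ := hS
        set A := S.erase e with hAdef
        have hSA : S = insert e A := (Finset.insert_erase hin).symm
        have heA : e ∉ A := Finset.notMem_erase e S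
        have hA : A ⊆ s := by
          intro i hi
          rw [hAdef, Finset.mem_erase] at hi
          exact (Finset.mem_insert.mp (hsub hi.2)).resolve_left hi.1
        have hsd : (insert e s) \ A = insert e (s \ A) := sdiff_insert_of_not_mem_A heA
        have hes : e ∉ s \ A := fun hc => he (Finset.mem_sdiff.mp hc).1
        have hstar : starL (insert e s) A (Pi.single e 1 : E → ℂ) = Pi.single S (1:ℂ) := by
          rw [starL_apply, hsd, Finset.sum_insert hes]
          have hz : ∀ i ∈ s \ A, ((Pi.single e 1 : E → ℂ) i) • (Pi.single (insert i A) 1 :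
              Finset E → ℂ) = 0 := by
            intro i hi
            have hne : i ≠ e := by rintro rfl; exact hes hi
            rw [Pi.single_apply, if_neg hne, zero_smul]
          rw [Finset.sum_congr rfl hz, Finset.sum_const, smul_zero, add_zero]
          rw [Pi.single_eq_same, one_smul, ← hSA]
        show (Pi.single S (1:ℂ) : Finset E → ℂ) ∈
          (WfS (insert e s) L ⊓ LinearMap.ker (trunc e) : Submodule ℂ (Finset E → ℂ))
        rw [Submodule.mem_inf, ← hstar]
        constructor
        · apply starL_mem_WfS
          · exact hA.trans (Finset.subset_insert e s)
          · constructor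
            · intro i hi
              have hne : i ≠ e := by
                rintro rfl
                rw [hsd] at hi
                exact hi (Finset.mem_insert_self _ _)
              show (Pi.single e 1 : E → ℂ) i = 0
              rw [Pi.single_apply, if_neg hne]
            · intro x hx
              rw [hsd, Finset.sum_insert hes]
              have hz : ∀ i ∈ s \ A, ((Pi.single e 1 : E → ℂ) i) * x i = 0 := by
                intro i hi
                have hne : i ≠ e := by rintro rfl; exact hes hi
                rw [Pi.single_apply, if_neg hne, zero_mul]
              rw [Finset.sum_congr rfl hz, Finset.sum_const, smul_zero, add_zero]
              rw [Pi.single_eq_same, one_mul]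
              exact hloop x hx
        · rw [LinearMap.mem_ker, hstar, trunc_single_of_mem hin]
      calc depC (insert e s) L = depC s L + 2 ^ s.card := depC_insert_loop L he hloop
        _ ≤ Module.finrank ℂ ((WfS (insert e s) L).map (trunc e))
            + Module.finrank ℂ ((WfS (insert e s) L) ⊓ LinearMap.ker (trunc e) :
              Submodule ℂ (Finset E → ℂ)) := by
            gcongr
            · exact le_trans (ih L) (Submodule.finrank_mono hlift)
            · rw [← card_filter_mem_epow he, ← finrank_span_singles]
              exact Submodule.finrank_mono hsingles
        _ = Module.finrank ℂ (WfS (insert e s) L) := hsplit.symm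
    · -- non-loop case
      push_neg at hloop
      obtain ⟨x₀, hx₀L, hx₀e⟩ := hloop
      set x' : E → ℂ := (x₀ e)⁻¹ • x₀ with hx'def
      have hx' : x' ∈ L := L.smul_mem _ hx₀L
      have hxe : x' e = 1 := by
        rw [hx'def]
        simp [inv_mul_cancel₀ hx₀e]
      have hlift : WfS s (ctr L e) ≤ (WfS (insert e s) L).map (trunc e) := by
        rw [WfS, Submodule.span_le]
        rintro w ⟨A, u', hA, ⟨hsupp, hann⟩, rfl⟩
        have heA : e ∉ A := fun hc => he (hA hc)
        have hsd : (insert e s) \ A = insert e (s \ A) := sdiff_insert_of_not_mem_A heA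
        have hes : e ∉ s \ A := fun hc => he (Finset.mem_sdiff.mp hc).1
        have hu'e : u' e = 0 := hsupp e hes
        set ℓ : ℂ := -(∑ i ∈ s \ A, u' i * x' i) with hℓdef
        set u : E → ℂ := u' + ℓ • (Pi.single e 1 : E → ℂ) with hudef
        have hu_on : ∀ i ∈ s \ A, u i = u' i := by
          intro i hi
          have hne : i ≠ e := by rintro rfl; exact hes hi
          rw [hudef]
          simp [Pi.single_apply, hne]
        have hue : u e = ℓ := by
          rw [hudef]
          simp [Pi.single_apply, hu'e]
        refine Submodule.mem_map.mpr ⟨starL (insert e s) A u, ?_, ?_⟩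
        · apply starL_mem_WfS
          · exact hA.trans (Finset.subset_insert e s)
          · constructor
            · intro i hi
              rw [hsd, Finset.mem_insert] at hi
              push_neg at hi
              rw [hudef]
              simp only [Pi.add_apply, Pi.smul_apply, smul_eq_mul]
              rw [Pi.single_apply, if_neg hi.1, hsupp i hi.2]
              ring
            · intro x hx
              rw [hsd, Finset.sum_insert hes, hue]
              have hrest : ∀ i ∈ s \ A, u i * x i = u' i * x i :=
                fun i hi => by rw [hu_on i hi]
              rw [Finset.sum_congr rfl hrest]
              -- use x - (x e) • x' ∈ ctr L e
              have hmem : x - (x e) • x' ∈ ctr L e := by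
                rw [mem_ctr]
                constructor
                · exact L.sub_mem hx (L.smul_mem _ hx')
                · simp [hxe]
              have h0 := hann _ hmem
              have hexp : ∑ i ∈ s \ A, u' i * (x i - x e * x' i)
                  = ∑ i ∈ s \ A, u' i * x i - x e * ∑ i ∈ s \ A, u' i * x' i := by
                rw [Finset.mul_sum, ← Finset.sum_sub_distrib]
                apply Finset.sum_congr rfl
                intro i _
                ring
              have h0' : ∑ i ∈ s \ A, u' i * (x - x e • x') i = 0 := h0
              have heq : ∀ i ∈ s \ A, u' i * (x - x e • x') i
                  = u' i * (x i - x e * x' i) := by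
                intro i _
                simp
              rw [Finset.sum_congr rfl heq, hexp] at h0'
              have hxe2 := sub_eq_zero.mp h0'
              rw [hℓdef, hxe2]
              ring
        · rw [starL_apply, starL_apply, map_sum, hsd, Finset.sum_insert hes]
          have hz : trunc e ((u e) • (Pi.single (insert e A) 1 : Finset E → ℂ)) = 0 := by
            rw [map_smul, trunc_single_of_mem (Finset.mem_insert_self e A), smul_zero]
          rw [hz, zero_add]
          apply Finset.sum_congr rfl
          intro i hi
          rw [Finset.mem_sdiff] at hi
          have hie : e ∉ insert i A := by
            rw [Finset.mem_insert]
            rintro (rfl | hc)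
            · exact he hi.1
            · exact heA hc
          rw [map_smul, trunc_single_of_not_mem hie, hu_on i (Finset.mem_sdiff.mpr hi)]
      calc depC (insert e s) L = depC s L + depC s (ctr L e) :=
            depC_insert_nonloop L he x' hx' hxe
        _ ≤ Module.finrank ℂ ((WfS (insert e s) L) ⊓ LinearMap.ker (trunc e) :
              Submodule ℂ (Finset E → ℂ))
            + Module.finrank ℂ ((WfS (insert e s) L).map (trunc e)) := by
            gcongr
            · calc depC s L ≤ Module.finrank ℂ (WfS s L) := ih L
                _ = Module.finrank ℂ ((WfS s L).map (shft e)) := hshiftrank.symm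
                _ ≤ _ := Submodule.finrank_mono hshift
            · exact le_trans (ih (ctr L e)) (Submodule.finrank_mono hlift)
        _ = Module.finrank ℂ (WfS (insert e s) L) := by rw [hsplit]; omega

section circuits

variable (α : Finset E → E → ℂ)

/-- span of the explicit circuit relation vectors -/
def Wvec : Submodule ℂ (Finset E → ℂ) :=
  Submodule.span ℂ {w | ∃ C A : Finset E, IsCircuit E L C ∧ Disjoint A C ∧
    w = ∑ i ∈ C, α C i • (Pi.single (insert i A) 1 : Finset E → ℂ)}

/-- extension of circuit data to a full vector -/
def cvec (C : Finset E) : E → ℂ := fun i => if i ∈ C then α C i else 0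

lemma supp_not_indep {u : E → ℂ} (hu : ∀ x ∈ L, ∑ i, u i * x i = 0) {j : E} (hj : u j ≠ 0) :
    ¬ Indep E L (Finset.univ.filter (fun i => u i ≠ 0)) := by
  intro h
  obtain ⟨x, hx, hxi⟩ := h (fun i => if i = j then 1 else 0)
  have hjmem : j ∈ Finset.univ.filter (fun i => u i ≠ 0) := by
    simp [hj]
  have hsum : ∀ i ∈ Finset.univ, u i * x i = if i = j then u j else 0 := by
    intro i _
    by_cases hmem : i ∈ Finset.univ.filter (fun i => u i ≠ 0)
    · rw [hxi i hmem]
      by_cases hij : i = j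
      · subst hij; simp
      · simp [hij]
    · have hui : u i = 0 := by
        by_contra hne
        exact hmem (by simp [hne])
      have hij : i ≠ j := by rintro rfl; exact hj hui
      simp [hui, hij]
  have h0 := hu x hx
  rw [Finset.sum_congr rfl hsum, Finset.sum_ite_eq' Finset.univ j (fun _ => u j)] at h0
  simp at h0
  exact hj h0

lemma exists_circuit {S : Finset E} (hS : ¬ Indep E L S) :
    ∃ C, C ⊆ S ∧ IsCircuit E L C := by
  obtain ⟨C, hC, hmin⟩ := Finset.exists_minimal
    (s := S.powerset.filter (fun T => ¬ Indep E L T))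
    ⟨S, by simp [Finset.mem_filter, hS]⟩
  rw [Finset.mem_filter, Finset.mem_powerset] at hC
  refine ⟨C, hC.1, hC.2, ?_⟩
  intro C' hC'
  by_contra hdep
  exact hC'.2 (hmin (show C' ∈ S.powerset.filter (fun T => ¬ Indep E L T) by
    rw [Finset.mem_filter, Finset.mem_powerset]
    exact ⟨hC'.subset.trans hC.1, hdep⟩) hC'.le)

lemma elementary (hα : CircuitData E L α) :
    ∀ (k : ℕ) (u : E → ℂ) (D : Finset E),
    (∀ i, i ∉ D → u i = 0) → (Finset.univ.filter (fun i => u i ≠ 0)).card ≤ k →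
    (∀ x ∈ L, ∑ i, u i * x i = 0) →
    u ∈ Submodule.span ℂ {v : E → ℂ | ∃ C, IsCircuit E L C ∧ C ⊆ D ∧ v = cvec α C} := by
  intro k
  induction k with
  | zero =>
    intro u D hD hcard hann
    have hu : u = 0 := by
      funext i
      rw [Pi.zero_apply]
      by_contra hne
      have : i ∈ Finset.univ.filter (fun i => u i ≠ 0) := by simp [hne]
      have := Finset.card_pos.mpr ⟨i, this⟩
      omega
    rw [hu]
    exact Submodule.zero_mem _
  | succ k ih =>
    intro u D hD hcard hann
    by_cases hu : u = 0
    · rw [hu]; exact Submodule.zero_mem _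
    · set su := Finset.univ.filter (fun i => u i ≠ 0) with hsu
      have hsuD : su ⊆ D := by
        intro i hi
        rw [hsu, Finset.mem_filter] at hi
        by_contra hcon
        exact hi.2 (hD i hcon)
      have hne : ∃ j, u j ≠ 0 := by
        by_contra hc
        push_neg at hc
        exact hu (funext hc)
      obtain ⟨j₀, hj₀⟩ := hne
      have hdep : ¬ Indep E L su := supp_not_indep L hann hj₀
      obtain ⟨C, hCsu, hCcirc⟩ := exists_circuit L hdep
      obtain ⟨⟨j, hjC, hαj⟩, hannC⟩ := hα C hCcirc
      have hujne : u j ≠ 0 := by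
        have := hCsu hjC
        rw [hsu, Finset.mem_filter] at this
        exact this.2
      set r : ℂ := u j / α C j with hr
      set u' : E → ℂ := u - r • cvec α C with hu'
      have hcvs : ∀ x ∈ L, ∑ i, cvec α C i * x i = 0 := by
        intro x hx
        have hsub : ∑ i ∈ C, cvec α C i * x i = ∑ i : E, cvec α C i * x i := by
          apply Finset.sum_subset (Finset.subset_univ C)
          intro i _ hiC
          rw [cvec]
          simp [hiC]
        rw [← hsub]
        have : ∀ i ∈ C, cvec α C i * x i = α C i * x i := by
          intro i hi
          rw [cvec]
          simp [hi]
        rw [Finset.sum_congr rfl this]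
        exact hannC x hx
      have hann' : ∀ x ∈ L, ∑ i, u' i * x i = 0 := by
        intro x hx
        rw [hu']
        have : ∀ i ∈ Finset.univ, (u - r • cvec α C) i * x i
            = u i * x i - r * (cvec α C i * x i) := by
          intro i _
          simp only [Pi.sub_apply, Pi.smul_apply, smul_eq_mul]
          ring
        rw [Finset.sum_congr rfl this, Finset.sum_sub_distrib, hann x hx, ← Finset.mul_sum,
          hcvs x hx, mul_zero, sub_zero]
      have hsupp' : ∀ i, i ∉ su.erase j → u' i = 0 := by
        intro i hi
        rw [Finset.mem_erase] at hi
        push_neg at hi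
        rw [hu']
        by_cases hij : i = j
        · subst hij
          simp only [Pi.sub_apply, Pi.smul_apply, smul_eq_mul, hr, cvec]
          rw [if_pos hjC, div_mul_cancel₀ _ hαj, sub_self]
        · have hiu : u i = 0 := by
            have : i ∉ su := hi hij
            rw [hsu, Finset.mem_filter] at this
            push_neg at this
            exact this (Finset.mem_univ i)
          have hiC : i ∉ C := by
            intro hc
            have := hCsu hc
            rw [hsu, Finset.mem_filter] at this
            exact this.2 hiu
          simp only [Pi.sub_apply, Pi.smul_apply, smul_eq_mul, cvec]
          simp [hiu, hiC]
      have hcard' : (Finset.univ.filter (fun i => u' i ≠ 0)).card ≤ k := by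
        have hsub : Finset.univ.filter (fun i => u' i ≠ 0) ⊆ su.erase j := by
          intro i hi
          rw [Finset.mem_filter] at hi
          by_contra hc
          exact hi.2 (hsupp' i hc)
        have h1 := Finset.card_le_card hsub
        have hjsu : j ∈ su := hCsu hjC
        have h2 : (su.erase j).card = su.card - 1 := Finset.card_erase_of_mem hjsu
        have h3 : 1 ≤ su.card := Finset.card_pos.mpr ⟨j, hjsu⟩
        omega
      have hD' : ∀ i, i ∉ D → u' i = 0 := by
        intro i hi
        apply hsupp' i
        intro hc
        exact hi (hsuD (Finset.mem_of_mem_erase hc))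
      have hmem' := ih u' D hD' hcard' hann'
      have hcv : cvec α C ∈ Submodule.span ℂ
          {v : E → ℂ | ∃ C', IsCircuit E L C' ∧ C' ⊆ D ∧ v = cvec α C'} :=
        Submodule.subset_span ⟨C, hCcirc, hCsu.trans hsuD, rfl⟩
      have : u = u' + r • cvec α C := by rw [hu', sub_add_cancel]
      rw [this]
      exact Submodule.add_mem _ hmem' (Submodule.smul_mem _ r hcv)

lemma starL_cvec {C A : Finset E} (hCcirc : IsCircuit E L C) (hAC : Disjoint A C) :
    starL Finset.univ A (cvec α C)
      = ∑ i ∈ C, α C i • (Pi.single (insert i A) 1 : Finset E → ℂ) := by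
  have hsub : C ⊆ Finset.univ \ A := fun i hi =>
    Finset.mem_sdiff.mpr ⟨Finset.mem_univ i, Finset.disjoint_right.mp hAC hi⟩
  have hzero : ∀ i ∈ Finset.univ \ A, i ∉ C →
      cvec α C i • (Pi.single (insert i A) 1 : Finset E → ℂ) = 0 := by
    intro i _ hiC
    rw [cvec]
    simp [hiC]
  rw [starL_apply, ← Finset.sum_subset hsub hzero]
  apply Finset.sum_congr rfl
  intro i hi
  rw [cvec]
  simp [hi]

lemma Wvec_eq_WfS (hα : CircuitData E L α) :
    Wvec L α = WfS Finset.univ L := by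
  apply le_antisymm
  · rw [Wvec, Submodule.span_le]
    rintro w ⟨C, A, hCcirc, hAC, rfl⟩
    rw [SetLike.mem_coe, ← starL_cvec L α hCcirc hAC]
    apply starL_mem_WfS
    · exact Finset.subset_univ A
    · constructor
      · intro i hi
        rw [Finset.mem_sdiff] at hi
        push_neg at hi
        have hiA := hi (Finset.mem_univ i)
        have hiC : i ∉ C := Finset.disjoint_left.mp hAC hiA
        rw [cvec]
        simp [hiC]
      · intro x hx
        have h1 : ∑ i ∈ Finset.univ \ A, cvec α C i * x i = ∑ i ∈ C, α C i * x i := by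
          rw [← Finset.sum_subset (show C ⊆ Finset.univ \ A from ?hsub)]
          · apply Finset.sum_congr rfl
            intro i hi
            rw [cvec]; simp [hi]
          · intro i _ hiC
            rw [cvec]; simp [hiC]
          case hsub =>
            intro i hi
            rw [Finset.mem_sdiff]
            exact ⟨Finset.mem_univ i, Finset.disjoint_right.mp hAC hi⟩
        rw [h1]
        exact (hα C hCcirc).2 x hx
  · rw [WfS, Submodule.span_le]
    rintro w ⟨A, u, hA, ⟨hsupp, hann⟩, rfl⟩
    have hannfull : ∀ x ∈ L, ∑ i, u i * x i = 0 := by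
      intro x hx
      rw [← Finset.sum_subset (Finset.sdiff_subset : Finset.univ \ A ⊆ Finset.univ)]
      · exact hann x hx
      · intro i _ hi
        rw [hsupp i hi, zero_mul]
    have hu := elementary L α hα (Finset.univ.filter (fun i => u i ≠ 0)).card u
      (Finset.univ \ A) hsupp le_rfl hannfull
    have himg := Submodule.apply_mem_span_image_of_mem_span (starL Finset.univ A) hu
    rw [SetLike.mem_coe]
    refine Submodule.span_le.mpr ?_ himg
    rintro w' ⟨v, ⟨C, hCcirc, hCD, rfl⟩, rfl⟩
    have hAC : Disjoint A C := by
      rw [Finset.disjoint_right]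
      intro i hi
      exact (Finset.mem_sdiff.mp (hCD hi)).2
    rw [starL_cvec L α hCcirc hAC]
    exact Submodule.subset_span ⟨C, A, hCcirc, hAC, rfl⟩

end circuits

lemma finrank_WfS_eq : Module.finrank ℂ (WfS (Finset.univ : Finset E) L) = depC Finset.univ L := by
  have h1 := finrank_RelS_le (Finset.univ : Finset E) L
  have h2 := depC_le_finrank_WfS (Finset.univ : Finset E) L
  have h3 : Module.finrank ℂ (WfS (Finset.univ : Finset E) L) ≤ Module.finrank ℂ (RelS Finset.univ L) :=
    Submodule.finrank_mono (WfS_le_RelS L Finset.univ)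
  omega

section graded

open MvPolynomial

variable (α : Finset E → E → ℂ)

/-- coordinates-to-linear-forms map -/
def theta : (Finset E → ℂ) →ₗ[ℂ] MvPolynomial (Finset E) ℂ :=
  ∑ S : Finset E, (LinearMap.proj S).smulRight (MvPolynomial.X S)

lemma theta_apply (c : Finset E → ℂ) :
    theta c = ∑ S : Finset E, c S • (MvPolynomial.X S : MvPolynomial (Finset E) ℂ) := by
  simp [theta]

lemma coeff_theta (c : Finset E → ℂ) (S : Finset E) :
    MvPolynomial.coeff (Finsupp.single S 1) (theta c) = c S := by
  rw [theta_apply, MvPolynomial.coeff_sum]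
  have h : ∀ T ∈ Finset.univ, MvPolynomial.coeff (Finsupp.single S 1)
      (c T • (MvPolynomial.X T : MvPolynomial (Finset E) ℂ))
      = if T = S then c T else 0 := by
    intro T _
    rw [MvPolynomial.coeff_smul, MvPolynomial.coeff_X']
    by_cases h : T = S
    · subst h; simp
    · have hne : ¬ (Finsupp.single T (1:ℕ) = Finsupp.single S 1) := by
        intro hc
        exact h ((Finsupp.single_left_inj one_ne_zero).mp hc)
      simp [hne, h]
  rw [Finset.sum_congr rfl h, Finset.sum_ite_eq' Finset.univ S (fun T => c T),
    if_pos (Finset.mem_univ S)]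

lemma theta_inj : Function.Injective (theta : (Finset E → ℂ) →ₗ[ℂ] _) := by
  intro a b h
  funext S
  have h2 := congrArg (MvPolynomial.coeff (Finsupp.single S 1)) h
  rwa [coeff_theta, coeff_theta] at h2

lemma theta_single (T : Finset E) :
    theta (Pi.single T (1:ℂ)) = (MvPolynomial.X T : MvPolynomial (Finset E) ℂ) := by
  rw [theta_apply]
  have h : ∀ S ∈ Finset.univ, ((Pi.single T (1:ℂ) : Finset E → ℂ) S) •
      (MvPolynomial.X S : MvPolynomial (Finset E) ℂ)
      = if S = T then MvPolynomial.X T else 0 := by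
    intro S _
    rw [Pi.single_apply]
    by_cases h : S = T
    · subst h; simp
    · simp [h]
  rw [Finset.sum_congr rfl h, Finset.sum_ite_eq' Finset.univ T
    (fun _ => (MvPolynomial.X T : MvPolynomial (Finset E) ℂ)), if_pos (Finset.mem_univ T)]

lemma deg_univ (d : Finset E →₀ ℕ) : d.degree = ∑ S : Finset E, d S := by
  show ∑ S ∈ d.support, d S = _
  apply Finset.sum_subset (Finset.subset_univ _)
  intro S _ hS
  exact Finsupp.notMem_support_iff.mp hS

lemma deg_add (u v : Finset E →₀ ℕ) : (u + v).degree = u.degree + v.degree := by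
  rw [deg_univ, deg_univ, deg_univ, ← Finset.sum_add_distrib]
  apply Finset.sum_congr rfl
  intro S _
  simp

lemma degree_one_eq_single {d : Finset E →₀ ℕ} (hd : d.degree = 1) :
    ∃ S, d = Finsupp.single S 1 := by
  have hne : d ≠ 0 := by
    intro h
    rw [h, map_zero] at hd
    omega
  obtain ⟨a, ha⟩ := Finsupp.support_nonempty_iff.mpr hne
  have hsum : ∑ i ∈ d.support, d i = 1 := hd
  have hge : ∀ i ∈ d.support, 1 ≤ d i := fun i hi =>
    Nat.one_le_iff_ne_zero.mpr (Finsupp.mem_support_iff.mp hi)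
  have hcard : d.support.card ≤ 1 := by
    calc d.support.card = ∑ _i ∈ d.support, 1 := by simp
      _ ≤ ∑ i ∈ d.support, d i := Finset.sum_le_sum hge
      _ = 1 := hsum
  have hcard1 : d.support.card = 1 :=
    le_antisymm hcard (Finset.card_pos.mpr ⟨a, ha⟩)
  obtain ⟨S, hS⟩ := Finset.card_eq_one.mp hcard1
  refine ⟨S, ?_⟩
  rw [Finsupp.eq_single_iff]
  constructor
  · rw [hS]
  · have h2 : ∑ i ∈ d.support, d i = d S := by rw [hS, Finset.sum_singleton]
    omega

lemma theta_mem_H1 (c : Finset E → ℂ) :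
    theta c ∈ MvPolynomial.homogeneousSubmodule (Finset E) ℂ 1 := by
  rw [theta_apply]
  apply Submodule.sum_mem
  intro S _
  exact Submodule.smul_mem _ _
    ((MvPolynomial.mem_homogeneousSubmodule _ _).mpr (MvPolynomial.isHomogeneous_X ℂ S))

lemma range_theta : LinearMap.range (theta : (Finset E → ℂ) →ₗ[ℂ] _)
    = MvPolynomial.homogeneousSubmodule (Finset E) ℂ 1 := by
  apply le_antisymm
  · rintro p ⟨c, rfl⟩
    exact theta_mem_H1 c
  · intro p hp
    rw [MvPolynomial.mem_homogeneousSubmodule] at hp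
    refine ⟨fun S => MvPolynomial.coeff (Finsupp.single S 1) p, ?_⟩
    apply MvPolynomial.ext
    intro d
    by_cases hd : ∃ S, d = Finsupp.single S 1
    · obtain ⟨S, rfl⟩ := hd
      rw [coeff_theta]
    · have h1 : MvPolynomial.coeff d
          (theta (fun S => MvPolynomial.coeff (Finsupp.single S 1) p)) = 0 := by
        rw [theta_apply, MvPolynomial.coeff_sum]
        apply Finset.sum_eq_zero
        intro T _
        rw [MvPolynomial.coeff_smul, MvPolynomial.coeff_X',
          if_neg (fun hc => hd ⟨T, hc.symm⟩)]
        simp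
      rw [h1]
      exact (hp.coeff_eq_zero (fun hdeg => hd (degree_one_eq_single hdeg))).symm

lemma hcomp_smul_homog2 (q g : MvPolynomial (Finset E) ℂ) (hg : g.IsHomogeneous 2) :
    (MvPolynomial.homogeneousComponent 1) (q • g) = 0 := by
  apply MvPolynomial.ext
  intro d
  rw [MvPolynomial.coeff_homogeneousComponent, MvPolynomial.coeff_zero]
  by_cases hdeg : d.degree = 1
  · rw [if_pos hdeg, smul_eq_mul, MvPolynomial.coeff_mul]
    apply Finset.sum_eq_zero
    rintro ⟨u, v⟩ huv
    rw [Finset.HasAntidiagonal.mem_antidiagonal] at huv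
    have hdadd : u.degree + v.degree = d.degree := by rw [← huv, deg_add]
    have hv : v.degree ≠ 2 := by omega
    rw [hg.coeff_eq_zero hv, mul_zero]
  · rw [if_neg hdeg]

lemma hcomp_smul_homog1 (q g : MvPolynomial (Finset E) ℂ) (hg : g.IsHomogeneous 1) :
    (MvPolynomial.homogeneousComponent 1) (q • g) = (MvPolynomial.coeff 0 q) • g := by
  apply MvPolynomial.ext
  intro d
  rw [MvPolynomial.coeff_homogeneousComponent, MvPolynomial.coeff_smul, smul_eq_mul]
  by_cases hdeg : d.degree = 1
  · rw [if_pos hdeg, smul_eq_mul, MvPolynomial.coeff_mul]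
    apply Finset.sum_eq_single_of_mem (0, d)
      (Finset.HasAntidiagonal.mem_antidiagonal.mpr (zero_add d))
    rintro ⟨u, v⟩ huv hne
    rw [Finset.HasAntidiagonal.mem_antidiagonal] at huv
    by_cases hv : MvPolynomial.coeff v g = 0
    · rw [hv, mul_zero]
    · exfalso
      have hvdeg : v.degree = 1 := by
        by_contra hc
        exact hv (hg.coeff_eq_zero hc)
      have hdadd : u.degree + v.degree = d.degree := by rw [← huv, deg_add]
      have hu : u.degree = 0 := by omega
      have hu0 : u = 0 := (Finsupp.degree_eq_zero_iff u).mp hu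
      apply hne
      have hv2 : v = d := by rw [hu0, zero_add] at huv; exact huv
      rw [hu0, hv2]
  · rw [if_neg hdeg, hg.coeff_eq_zero hdeg]
    simp

lemma theta_gen {C A : Finset E} :
    theta (∑ i ∈ C, α C i • (Pi.single (insert i A) 1 : Finset E → ℂ))
      = ∑ i ∈ C, MvPolynomial.C (α C i) * MvPolynomial.X (insert i A) := by
  rw [map_sum]
  apply Finset.sum_congr rfl
  intro i _
  rw [map_smul, theta_single, MvPolynomial.smul_eq_C_mul]

lemma gen_mem_H1 {C A : Finset E} :
    (∑ i ∈ C, MvPolynomial.C (α C i) * MvPolynomial.X (insert i A) :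
      MvPolynomial (Finset E) ℂ) ∈ MvPolynomial.homogeneousSubmodule (Finset E) ℂ 1 := by
  rw [← theta_gen]
  exact theta_mem_H1 _

lemma map_theta_Wvec (hα : CircuitData E L α) :
    (Wvec L α).map (theta : (Finset E → ℂ) →ₗ[ℂ] _)
      = MvPolynomial.homogeneousSubmodule (Finset E) ℂ 1
        ⊓ (SEIdeal E L α).restrictScalars ℂ := by
  apply le_antisymm
  · rw [Wvec, Submodule.map_span, Submodule.span_le]
    rintro w ⟨v, ⟨C, A, hC, hAC, rfl⟩, rfl⟩
    rw [SetLike.mem_coe, Submodule.mem_inf]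
    constructor
    · exact theta_mem_H1 _
    · rw [Submodule.restrictScalars_mem, theta_gen, SEIdeal]
      exact Ideal.subset_span (Or.inr ⟨C, A, hC, hAC, rfl⟩)
  · rintro p hp
    rw [Submodule.mem_inf, MvPolynomial.mem_homogeneousSubmodule,
      Submodule.restrictScalars_mem] at hp
    obtain ⟨hp1, hp2⟩ := hp
    rw [SEIdeal] at hp2
    obtain ⟨c, hcsupp, hcsum⟩ := Submodule.mem_span_set.mp hp2
    have hp_eq : (MvPolynomial.homogeneousComponent 1) p = p := by
      apply MvPolynomial.ext
      intro d
      rw [MvPolynomial.coeff_homogeneousComponent]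
      by_cases hdeg : d.degree = 1
      · rw [if_pos hdeg]
      · rw [if_neg hdeg]
        exact (hp1.coeff_eq_zero hdeg).symm
    rw [← hp_eq, ← hcsum, Finsupp.sum, map_sum]
    apply Submodule.sum_mem
    intro g hg
    have hgen := hcsupp (Finset.mem_coe.mpr hg)
    rcases hgen with ⟨S, T, rfl⟩ | ⟨C, A, hC, hAC, rfl⟩
    · rw [hcomp_smul_homog2 _ _ (((MvPolynomial.isHomogeneous_X ℂ S).mul
        (MvPolynomial.isHomogeneous_X ℂ T)).sub
        ((MvPolynomial.isHomogeneous_X ℂ (S ∪ T)).mul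
          (MvPolynomial.isHomogeneous_X ℂ (S ∩ T))))]
      exact Submodule.zero_mem _
    · rw [hcomp_smul_homog1 _ _ ((MvPolynomial.mem_homogeneousSubmodule _ _).mp
        (gen_mem_H1 α))]
      rw [← theta_gen, ← map_smul]
      exact Submodule.mem_map_of_mem
        (Submodule.smul_mem _ _ (Submodule.subset_span ⟨C, A, hC, hAC, rfl⟩))

lemma RLdim_one (hα : CircuitData E L α) :
    RLdim E L α 1 = Fintype.card (Finset E) - depC Finset.univ L := by
  classical
  unfold RLdim
  set q := (Ideal.Quotient.mkₐ ℂ (SEIdeal E L α)).toLinearMap with hq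
  set H1 := MvPolynomial.homogeneousSubmodule (Finset E) ℂ 1 with hH1
  haveI hfin : Module.Finite ℂ H1 := by
    have h := Module.Finite.map (⊤ : Submodule ℂ (Finset E → ℂ))
      (theta : (Finset E → ℂ) →ₗ[ℂ] _)
    rw [Submodule.map_top, range_theta] at h
    exact h
  have hsplit := finrank_eq_map_add_inf_ker H1 q
  have hker : LinearMap.ker q = (SEIdeal E L α).restrictScalars ℂ := by
    ext x
    rw [LinearMap.mem_ker, Submodule.restrictScalars_mem, hq]
    show Ideal.Quotient.mkₐ ℂ (SEIdeal E L α) x = 0 ↔ _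
    rw [Ideal.Quotient.mkₐ_eq_mk]
    exact Ideal.Quotient.eq_zero_iff_mem
  have hinf : H1 ⊓ LinearMap.ker q = (Wvec L α).map (theta : (Finset E → ℂ) →ₗ[ℂ] _) := by
    rw [hker, map_theta_Wvec L α hα, hH1]
  have hH1rank : Module.finrank ℂ H1 = Fintype.card (Finset E) := by
    calc Module.finrank ℂ H1
        = Module.finrank ℂ (LinearMap.range (theta : (Finset E → ℂ) →ₗ[ℂ] _)) := by
          rw [range_theta, hH1]
      _ = Module.finrank ℂ (Finset E → ℂ) :=
          ((LinearEquiv.ofInjective _ (theta_inj (E := E))).finrank_eq).symm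
      _ = Fintype.card (Finset E) := Module.finrank_pi ℂ
  have hWrank : Module.finrank ℂ ((Wvec L α).map (theta : (Finset E → ℂ) →ₗ[ℂ] _))
      = depC Finset.univ L := by
    rw [← (Submodule.equivMapOfInjective _ (theta_inj (E := E)) (Wvec L α)).finrank_eq,
      Wvec_eq_WfS L α hα, finrank_WfS_eq]
  rw [hinf, hWrank] at hsplit
  omega

end graded

end S14

theorem stmt14' (n : ℕ) (L : Submodule ℂ (Fin n → ℂ))
    (α : Finset (Fin n) → Fin n → ℂ) (hα : CircuitData (Fin n) L α) :
    RLdim (Fin n) L α 1 =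
      (Finset.univ.filter (fun I : Finset (Fin n) => Indep (Fin n) L I)).card := by
  classical
  have h1 := S14.RLdim_one L α hα
  have h2 : S14.depC (Finset.univ : Finset (Fin n)) L
      = (Finset.univ.filter (fun I : Finset (Fin n) => ¬ Indep (Fin n) L I)).card := by
    rw [S14.depC, Finset.powerset_univ]
  have h3 := Finset.card_filter_add_card_filter_not
    (s := (Finset.univ : Finset (Finset (Fin n)))) (fun I => Indep (Fin n) L I)
  rw [Finset.card_univ] at h3
  omega

/-- `dim_ℂ (R_L)_1` equals the number of independent sets of `M`. -/
theorem stmt14 (n d : ℕ) (L : Submodule ℂ (Fin n → ℂ)) (hd : Module.finrank ℂ L = d)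
    (α : Finset (Fin n) → Fin n → ℂ) (hα : CircuitData (Fin n) L α) :
    RLdim (Fin n) L α 1 =
      (Finset.univ.filter (fun I : Finset (Fin n) => Indep (Fin n) L I)).card :=
  stmt14' n L α hα
end
end
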